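/- arXiv:1512.06655 — 5 statements merged into one kernel-verified Lean document; each statement's English description precedes it below -/
import Mathlib

section
/- Let 0 ≤ t ≤ r ≤ n, and let 𝓜 be a class of matroids that is closed under contraction and under isomorphism, such that no member of 𝓜 of rank r has a circuit of cardinality at most t. Write \tilde m(n,r) for the number of members of 𝓜 with ground set {1,…,n} and rank r. Then log \tilde m(n,r) ≤ ( C(n,r) / C(n−t, r−t) ) · log \tilde m(n−t, r−t). -/
open Matroid Set Filter Real

namespace PavingEnum

/-- The rank of a matroid: the largest cardinality of a base. -/
noncomputable def mrk {α : Type*} (M : Matroid α) : ℕ :=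
  sSup {n : ℕ | ∃ B, M.IsBase B ∧ B.ncard = n}

/-- The rank of a set in a matroid: the largest cardinality of an
independent subset of the set. -/
noncomputable def mrnk {α : Type*} (M : Matroid α) (X : Set α) : ℕ :=
  sSup {n : ℕ | ∃ I, I ⊆ X ∧ M.Indep I ∧ I.ncard = n}

/-- A circuit is a minimal dependent set. -/
def IsCircuit {α : Type*} (M : Matroid α) (C : Set α) : Prop :=
  M.Dep C ∧ ∀ D, D ⊂ C → M.Indep D

/-- A matroid of rank `r` is paving if every circuit has cardinality at least `r`. -/
def Paving {α : Type*} (M : Matroid α) : Prop :=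
  ∀ C, IsCircuit M C → (mrk M : ℕ∞) ≤ C.encard

/-- A matroid is sparse paving if both it and its dual are paving. -/
def SparsePaving {α : Type*} (M : Matroid α) : Prop :=
  Paving M ∧ Paving M✶

/-- `numMatroids n r` : the number of matroids on the ground set `{1, …, n}` of rank `r`. -/
noncomputable def numMatroids (n r : ℕ) : ℕ :=
  {M : Matroid (Fin n) | M.E = Set.univ ∧ mrk M = r}.ncard

/-- `numPaving n r` : the number of paving matroids on `{1, …, n}` of rank `r`. -/
noncomputable def numPaving (n r : ℕ) : ℕ :=
  {M : Matroid (Fin n) | M.E = Set.univ ∧ mrk M = r ∧ Paving M}.ncard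

/-- `numSparsePaving n r` : the number of sparse paving matroids on `{1, …, n}` of rank `r`. -/
noncomputable def numSparsePaving (n r : ℕ) : ℕ :=
  {M : Matroid (Fin n) | M.E = Set.univ ∧ mrk M = r ∧ SparsePaving M}.ncard

end PavingEnum

namespace PavingEnum

/-- The contraction `M / C`, defined by duality from restriction. -/
noncomputable def mcontract {α : Type*} (M : Matroid α) (C : Set α) : Matroid α :=
  (M✶ ↾ (M.E \ C))✶

/-- An isomorphism between matroids: a bijection between the ground sets
preserving independence. -/
def MatroidIso {α β : Type*} (M : Matroid α) (N : Matroid β) : Prop :=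
  ∃ e : M.E ≃ N.E, ∀ I : Set M.E,
    M.Indep ((↑) '' I) ↔ N.Indep ((↑) '' (e '' I))

/-- The number of members of the class `𝓜` with ground set `{1, …, n}` and rank `r`. -/
noncomputable def classCount (𝓜 : ∀ ⦃α : Type⦄, Matroid α → Prop) (n r : ℕ) : ℕ :=
  {M : Matroid (Fin n) | 𝓜 M ∧ M.E = Set.univ ∧ mrk M = r}.ncard

end PavingEnum


section Aux
namespace PavingEnum

open Matroid Set Finset
open scoped NNReal


/-- Generalized Hölder via weighted AM-GM. -/
lemma hoelder_nnreal {σ τ : Type*} (X : Finset σ) (J : Finset τ) (f : τ → σ → ℝ≥0)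
    (k : ℕ) (hk : J.card = k) (hk0 : 0 < k) :
    ∑ x ∈ X, ∏ j ∈ J, (f j x) ^ (1/(k:ℝ)) ≤ ∏ j ∈ J, (∑ x ∈ X, f j x) ^ (1/(k:ℝ)) := by
  by_cases hz : ∃ j ∈ J, ∑ x ∈ X, f j x = 0
  · obtain ⟨j, hjJ, hj⟩ := hz
    have h0 : ∀ x ∈ X, f j x = 0 := by
      intro x hx
      exact (Finset.sum_eq_zero_iff.1 hj) x hx
    have : ∑ x ∈ X, ∏ j' ∈ J, (f j' x) ^ (1/(k:ℝ)) = 0 := by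
      refine Finset.sum_eq_zero fun x hx => ?_
      refine Finset.prod_eq_zero hjJ ?_
      rw [h0 x hx, NNReal.zero_rpow]
      positivity
    rw [this]
    exact zero_le
  · push_neg at hz
    set c : τ → ℝ≥0 := fun j => ∑ x ∈ X, f j x with hc
    have hcpos : ∀ j ∈ J, c j ≠ 0 := fun j hj => hz j hj
    have key : ∀ x ∈ X, ∏ j ∈ J, (f j x) ^ (1/(k:ℝ))
        = (∏ j ∈ J, (c j) ^ (1/(k:ℝ))) * ∏ j ∈ J, (f j x / c j) ^ (1/(k:ℝ)) := by
      intro x hx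
      rw [← Finset.prod_mul_distrib]
      refine Finset.prod_congr rfl fun j hj => ?_
      rw [← NNReal.mul_rpow, mul_div_cancel₀ _ (hcpos j hj)]
    rw [Finset.sum_congr rfl key, ← Finset.mul_sum]
    have hle1 : ∑ x ∈ X, ∏ j ∈ J, (f j x / c j) ^ (1/(k:ℝ)) ≤ 1 := by
      have wsum : ∑ _j ∈ J, ((k:ℝ≥0)⁻¹) = 1 := by
        rw [Finset.sum_const, hk, nsmul_eq_mul]
        rw [mul_inv_cancel₀]
        exact_mod_cast hk0.ne'
      have hexp : ((((k:ℝ≥0))⁻¹ : ℝ≥0) : ℝ) = 1/(k:ℝ) := by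
        push_cast
        rw [one_div]
      calc ∑ x ∈ X, ∏ j ∈ J, (f j x / c j) ^ (1/(k:ℝ))
          ≤ ∑ x ∈ X, ∑ j ∈ J, ((k:ℝ≥0)⁻¹) * (f j x / c j) := by
            refine Finset.sum_le_sum fun x hx => ?_
            have := NNReal.geom_mean_le_arith_mean_weighted J (fun _ => (k:ℝ≥0)⁻¹)
              (fun j => f j x / c j) wsum
            simpa [hexp] using this
        _ = ∑ j ∈ J, ((k:ℝ≥0)⁻¹) * ((∑ x ∈ X, f j x) / c j) := by
            rw [Finset.sum_comm]
            refine Finset.sum_congr rfl fun j hj => ?_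
            rw [← Finset.mul_sum, Finset.sum_div]
        _ = ∑ _j ∈ J, ((k:ℝ≥0)⁻¹) * 1 := by
            refine Finset.sum_congr rfl fun j hj => ?_
            rw [show (∑ x ∈ X, f j x) = c j from rfl, div_self (hcpos j hj)]
        _ = 1 := by
            simp only [mul_one]
            exact wsum
    calc (∏ j ∈ J, (c j) ^ (1/(k:ℝ))) * ∑ x ∈ X, ∏ j ∈ J, (f j x / c j) ^ (1/(k:ℝ))
        ≤ (∏ j ∈ J, (c j) ^ (1/(k:ℝ))) * 1 := by
          exact mul_le_mul_right hle1 _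
      _ = ∏ j ∈ J, (c j) ^ (1/(k:ℝ)) := mul_one _



variable {ι τ β : Type*} [Fintype ι] [DecidableEq ι] [DecidableEq β] [DecidableEq τ]

/-- The "partial projection" recording the coordinates in `G`. -/
def proj (G : Finset ι) (s : ι → β) : ι → Option β :=
  fun i => if i ∈ G then some (s i) else none

lemma hoelder_nnreal' : True := trivial

/-- Combinatorial Shearer / uniform cover inequality. -/
lemma shearer (k : ℕ) (hk0 : 0 < k) (F : τ → Finset ι) (𝒯 : Finset τ)
    (A : Finset ι) (S : Finset (ι → β))
    (hagree : ∀ s ∈ S, ∀ s' ∈ S, ∀ i, i ∉ A → s i = s' i)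
    (hcov : ∀ i ∈ A, k ≤ (𝒯.filter (fun T => i ∈ F T)).card) :
    (S.card : ℝ≥0) ≤ ∏ T ∈ 𝒯, ((S.image (proj (F T))).card : ℝ≥0) ^ (1/(k:ℝ)) := by
  classical
  induction A using Finset.induction_on generalizing S with
  | empty =>
    rcases S.eq_empty_or_nonempty with rfl | hS
    · simp
    · have hcard : S.card ≤ 1 := by
        refine Finset.card_le_one.2 fun s hs s' hs' => ?_
        funext i
        exact hagree s hs s' hs' i (by simp)
      have h1 : (S.card : ℝ≥0) ≤ 1 := by exact_mod_cast hcard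
      refine h1.trans ?_
      refine Finset.one_le_prod' fun T hT => ?_
      have : (1:ℝ≥0) ≤ ((S.image (proj (F T))).card : ℝ≥0) := by
        have : 0 < (S.image (proj (F T))).card :=
          Finset.card_pos.2 (hS.image _)
        exact_mod_cast this
      calc (1:ℝ≥0) = 1 ^ (1/(k:ℝ)) := (NNReal.one_rpow _).symm
        _ ≤ _ := NNReal.rpow_le_rpow this (by positivity)
  | @insert a A ha ih =>
    -- fibers over the value at coordinate a
    set B : Finset β := S.image (fun s => s a) with hB
    set Sb : β → Finset (ι → β) := fun b => S.filter (fun s => s a = b) with hSb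
    have hsplit : S.card = ∑ b ∈ B, (Sb b).card := by
      refine Finset.card_eq_sum_card_fiberwise fun s hs => ?_
      exact Finset.mem_image_of_mem _ hs
    -- a k-subset of the labels covering a
    obtain ⟨𝒦, h𝒦sub, h𝒦card⟩ :=
      Finset.exists_subset_card_eq (hcov a (Finset.mem_insert_self a A))
    have h𝒦𝒯 : 𝒦 ⊆ 𝒯 := h𝒦sub.trans (Finset.filter_subset _ _)
    have h𝒦a : ∀ T ∈ 𝒦, a ∈ F T := fun T hT => (Finset.mem_filter.1 (h𝒦sub hT)).2
    -- apply IH to each fiber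
    have hIH : ∀ b ∈ B, ((Sb b).card : ℝ≥0) ≤
        (∏ T ∈ 𝒯 \ 𝒦, ((S.image (proj (F T))).card : ℝ≥0) ^ (1/(k:ℝ))) *
        ∏ T ∈ 𝒦, (((Sb b).image (proj (F T))).card : ℝ≥0) ^ (1/(k:ℝ)) := by
      intro b hb
      have hag : ∀ s ∈ Sb b, ∀ s' ∈ Sb b, ∀ i, i ∉ A → s i = s' i := by
        intro s hs s' hs' i hi
        rcases Finset.mem_filter.1 hs with ⟨hsS, hsa⟩
        rcases Finset.mem_filter.1 hs' with ⟨hs'S, hs'a⟩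
        by_cases hia : i = a
        · subst hia; rw [hsa, hs'a]
        · exact hagree s hsS s' hs'S i (by simp [hia, hi])
      have h1 := ih (Sb b) hag (fun i hi => hcov i (Finset.mem_insert_of_mem hi))
      refine h1.trans ?_
      rw [← Finset.prod_sdiff h𝒦𝒯]
      refine mul_le_mul_of_nonneg_right ?_ (zero_le)
      refine Finset.prod_le_prod' fun T hT => ?_
      refine NNReal.rpow_le_rpow ?_ (by positivity)
      have : (Sb b).image (proj (F T)) ⊆ S.image (proj (F T)) :=
        Finset.image_subset_image (Finset.filter_subset _ _)
      exact_mod_cast Finset.card_le_card this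
    -- disjointness of fiber projections for T ∈ 𝒦
    have hdisj : ∀ T ∈ 𝒦, ∑ b ∈ B, (((Sb b).image (proj (F T))).card)
        ≤ (S.image (proj (F T))).card := by
      intro T hT
      have hpd : ∀ b ∈ B, ∀ b' ∈ B, b ≠ b' →
          Disjoint ((Sb b).image (proj (F T))) ((Sb b').image (proj (F T))) := by
        intro b hb b' hb' hne
        rw [Finset.disjoint_left]
        rintro u hu hu'
        obtain ⟨s, hs, rfl⟩ := Finset.mem_image.1 hu
        obtain ⟨s', hs', hss'⟩ := Finset.mem_image.1 hu'
        have h1 : proj (F T) s a = some b := by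
          simp [proj, h𝒦a T hT, (Finset.mem_filter.1 hs).2]
        have h2 : proj (F T) s' a = some b' := by
          simp [proj, h𝒦a T hT, (Finset.mem_filter.1 hs').2]
        rw [hss', h1] at h2
        exact hne (Option.some.inj h2)
      rw [← Finset.card_biUnion hpd]
      refine Finset.card_le_card ?_
      intro u hu
      obtain ⟨b, hb, hub⟩ := Finset.mem_biUnion.1 hu
      obtain ⟨s, hs, rfl⟩ := Finset.mem_image.1 hub
      exact Finset.mem_image_of_mem _ (Finset.filter_subset _ _ hs)
    -- combine
    calc (S.card : ℝ≥0) = ∑ b ∈ B, ((Sb b).card : ℝ≥0) := by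
          rw [hsplit]; push_cast; ring
      _ ≤ ∑ b ∈ B, ((∏ T ∈ 𝒯 \ 𝒦, ((S.image (proj (F T))).card : ℝ≥0) ^ (1/(k:ℝ))) *
            ∏ T ∈ 𝒦, (((Sb b).image (proj (F T))).card : ℝ≥0) ^ (1/(k:ℝ))) :=
          Finset.sum_le_sum hIH
      _ = (∏ T ∈ 𝒯 \ 𝒦, ((S.image (proj (F T))).card : ℝ≥0) ^ (1/(k:ℝ))) *
            ∑ b ∈ B, ∏ T ∈ 𝒦, (((Sb b).image (proj (F T))).card : ℝ≥0) ^ (1/(k:ℝ)) := by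
          rw [Finset.mul_sum]
      _ ≤ (∏ T ∈ 𝒯 \ 𝒦, ((S.image (proj (F T))).card : ℝ≥0) ^ (1/(k:ℝ))) *
            ∏ T ∈ 𝒦, ((∑ b ∈ B, (((Sb b).image (proj (F T))).card : ℝ≥0)) ^ (1/(k:ℝ))) := by
          refine mul_le_mul_of_nonneg_left ?_ (zero_le)
          exact hoelder_nnreal B 𝒦 (fun T b => (((Sb b).image (proj (F T))).card : ℝ≥0)) k h𝒦card hk0
      _ ≤ (∏ T ∈ 𝒯 \ 𝒦, ((S.image (proj (F T))).card : ℝ≥0) ^ (1/(k:ℝ))) *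
            ∏ T ∈ 𝒦, ((S.image (proj (F T))).card : ℝ≥0) ^ (1/(k:ℝ)) := by
          refine mul_le_mul_of_nonneg_left ?_ (zero_le)
          refine Finset.prod_le_prod' fun T hT => ?_
          refine NNReal.rpow_le_rpow ?_ (by positivity)
          exact_mod_cast hdisj T hT
      _ = ∏ T ∈ 𝒯, ((S.image (proj (F T))).card : ℝ≥0) ^ (1/(k:ℝ)) :=
          Finset.prod_sdiff h𝒦𝒯







variable {α : Type*} {M : Matroid α} {T B : Set α}

lemma mcontract_ground (M : Matroid α) (C : Set α) : (mcontract M C).E = M.E \ C := rfl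

/-- Base characterization of contraction by an independent set. -/
lemma mcontract_base_iff (hT : M.Indep T) (hB : B ⊆ M.E \ T) :
    (mcontract M T).IsBase B ↔ M.IsBase (B ∪ T) := by
  have hTE : T ⊆ M.E := hT.subset_ground
  have hBE : B ⊆ M.E := hB.trans diff_subset
  have hBT : Disjoint B T := (subset_diff.1 hB).2
  have hXE : M.E \ T ⊆ M✶.E := by rw [dual_ground]; exact diff_subset
  have h1 : (mcontract M T).IsBase B ↔ M✶.IsBasis ((M.E \ T) \ B) (M.E \ T) := by
    rw [mcontract, dual_isBase_iff', restrict_ground_eq, and_iff_left hB,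
      isBase_restrict_iff hXE]
  rw [h1]
  constructor
  · intro hbasis
    obtain ⟨B', hB', hDB'⟩ := hbasis.indep.exists_isBase_superset
    have hD : (M.E \ T) \ B = B' ∩ (M.E \ T) := by
      refine hbasis.eq_of_subset_indep (hB'.indep.inter_right _)
        (subset_inter hDB' hbasis.subset) inter_subset_right
    have hBasisT : M.IsBasis ((M.E \ B') ∩ T) T := by
      have h2 := (hB'.inter_isBasis_iff_compl_inter_isBasis_dual
        (X := M.E \ T) hXE).1 (by rw [← hD]; exact hbasis)
      simp only [dual_dual, dual_ground, diff_diff_cancel_left hTE] at h2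
      exact h2
    have hTB' : T ⊆ M.E \ B' := by
      have := hT.eq_of_isBasis hBasisT
      rw [← this]; exact inter_subset_left
    have hB'sub : B' ⊆ M.E \ T := by
      intro x hx
      refine ⟨hB'.subset_ground hx, fun hxT => (hTB' hxT).2 hx⟩
    have hB'D : B' = (M.E \ T) \ B := by
      rw [hD, inter_eq_self_of_subset_left hB'sub]
    have hdb : M✶.IsBase ((M.E \ T) \ B) := hB'D ▸ hB'
    have := (dual_isBase_iff (by exact diff_subset.trans diff_subset)).1 hdb
    rwa [diff_diff, diff_diff_cancel_left (union_subset hTE hBE), union_comm] at this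
  · intro hBase
    have h2 : M.IsBasis ((B ∪ T) ∩ T) T := by
      rw [inter_eq_self_of_subset_right subset_union_right]
      exact hT.isBasis_self
    have h3 := (hBase.inter_isBasis_iff_compl_inter_isBasis_dual (X := T) hTE).1 h2
    have hset : (M.E \ (B ∪ T)) ∩ (M.E \ T) = (M.E \ T) \ B := by
      rw [inter_eq_self_of_subset_left (diff_subset_diff_right subset_union_right),
        diff_diff, union_comm]
    rwa [hset] at h3

lemma Base_mrk_eq (hB : M.IsBase B) : mrk M = B.ncard := by
  have hset : {n : ℕ | ∃ B', M.IsBase B' ∧ B'.ncard = n} = {B.ncard} := by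
    ext k
    simp only [mem_setOf_eq, mem_singleton_iff]
    constructor
    · rintro ⟨B', hB', rfl⟩
      exact hB'.ncard_eq_ncard_of_isBase hB
    · rintro rfl
      exact ⟨B, hB, rfl⟩
  rw [mrk, hset, csSup_singleton]

lemma base_ncard_of_mrk (hB : M.IsBase B) {r : ℕ} (h : mrk M = r) : B.ncard = r := by
  rw [← h, Base_mrk_eq hB]

lemma base_of_indep_ncard {I : Set α} (hI : M.Indep I) (hcard : I.ncard = mrk M)
    (hfinE : M.E.Finite) : M.IsBase I := by
  obtain ⟨B, hB, hIB⟩ := hI.exists_isBase_superset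
  have hBfin : B.Finite := hfinE.subset hB.subset_ground
  have hle : B.ncard ≤ I.ncard := by rw [hcard, Base_mrk_eq hB]
  have := Set.eq_of_subset_of_ncard_le hIB hle hBfin
  exact this ▸ hB

/-- Small subsets of the ground set are independent when there is no small circuit. -/
lemma indep_of_small {t : ℕ} (hg : ∀ C, IsCircuit M C → ¬(C.encard ≤ (t : ℕ∞))) :
    ∀ (m : ℕ) (X : Set α), X.ncard = m → X ⊆ M.E → X.Finite →
      X.encard ≤ (t : ℕ∞) → M.Indep X := by
  intro m
  induction m using Nat.strong_induction_on with
  | _ m ih =>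
    intro X hm hXE hfin hX
    by_contra hXind
    by_cases hall : ∀ D, D ⊂ X → M.Indep D
    · exact hg X ⟨Matroid.dep_iff.2 ⟨hXind, hXE⟩, hall⟩ hX
    · push_neg at hall
      obtain ⟨D, hDX, hDind⟩ := hall
      refine hDind (ih D.ncard ?_ D rfl (hDX.subset.trans hXE)
        (hfin.subset hDX.subset) (le_trans (Set.encard_mono hDX.subset) hX))
      rw [← hm]
      exact Set.ncard_lt_ncard hDX hfin

section transport

variable {β : Type*} {P : Matroid α} {Q : Matroid β}

lemma coe_preimage_eq {γ : Type*} {G : Set γ} {X : Set γ} (hX : X ⊆ G) :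
    (Subtype.val '' (Subtype.val ⁻¹' X : Set ↥G) : Set γ) = X := by
  rw [Set.image_preimage_eq_inter_range, Subtype.range_coe]
  exact inter_eq_self_of_subset_left hX

lemma transport_symm (φ : ↥P.E ≃ ↥Q.E)
    (hφ : ∀ I : Set ↥P.E, P.Indep ↑I ↔ Q.Indep ↑(φ '' I)) :
    ∀ J : Set ↥Q.E, Q.Indep ↑J ↔ P.Indep ↑(φ.symm '' J) := by
  intro J
  have h1 := hφ (φ.symm '' J)
  have h2 : φ '' (φ.symm '' J) = J := by
    rw [← Set.image_comp]
    simp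
  rw [h2] at h1
  exact h1.symm

lemma transport_base (φ : ↥P.E ≃ ↥Q.E)
    (hφ : ∀ I : Set ↥P.E, P.Indep ↑I ↔ Q.Indep ↑(φ '' I))
    (B : Set ↥P.E) (hB : P.IsBase ↑B) : Q.IsBase ↑(φ '' B) := by
  rw [isBase_iff_maximal_indep] at hB ⊢
  obtain ⟨hBi, hBmax⟩ := hB
  refine ⟨(hφ B).1 hBi, fun J' hJ' hsub => ?_⟩
  set J : Set ↥Q.E := Subtype.val ⁻¹' J' with hJ
  have hJcoe : (Subtype.val '' J : Set β) = J' := coe_preimage_eq hJ'.subset_ground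
  have hPJ : P.Indep ↑(φ.symm '' J) := by
    rw [← (transport_symm φ hφ) J, hJcoe]
    exact hJ'
  have hsub2 : (B : Set ↥P.E) ⊆ φ.symm '' J := by
    have hsub3 : (φ '' B : Set ↥Q.E) ⊆ J := by
      rw [← Set.image_subset_image_iff Subtype.val_injective, hJcoe]
      exact hsub
    intro x hx
    have : φ x ∈ J := hsub3 (Set.mem_image_of_mem φ hx)
    exact ⟨φ x, this, by simp⟩
  have hcoe_sub : (↑B : Set α) ⊆ ↑(φ.symm '' J) := Set.image_mono hsub2
  have heq : (↑B : Set α) = ↑(φ.symm '' J) := le_antisymm hcoe_sub (hBmax hPJ hcoe_sub)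
  have heq2 : B = φ.symm '' J := Subtype.val_injective.image_injective heq
  have : φ '' B = J := by
    rw [heq2, ← Set.image_comp]
    simp
  rw [← hJcoe, this]

lemma transport_mrk_subset (φ : ↥P.E ≃ ↥Q.E)
    (hφ : ∀ I : Set ↥P.E, P.Indep ↑I ↔ Q.Indep ↑(φ '' I)) :
    {n : ℕ | ∃ B, P.IsBase B ∧ B.ncard = n} ⊆ {n : ℕ | ∃ B, Q.IsBase B ∧ B.ncard = n} := by
  rintro k ⟨B0, hB0, rfl⟩
  set B : Set ↥P.E := Subtype.val ⁻¹' B0 with hB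
  have hBcoe : (Subtype.val '' B : Set α) = B0 := coe_preimage_eq hB0.subset_ground
  refine ⟨↑(φ '' B), transport_base φ hφ B (by rwa [hBcoe]), ?_⟩
  rw [Set.ncard_image_of_injective _ Subtype.val_injective,
    Set.ncard_image_of_injective _ φ.injective, ← hBcoe,
    Set.ncard_image_of_injective _ Subtype.val_injective]

lemma transport_mrk (φ : ↥P.E ≃ ↥Q.E)
    (hφ : ∀ I : Set ↥P.E, P.Indep ↑I ↔ Q.Indep ↑(φ '' I)) : mrk Q = mrk P := by
  have hsymm : ∀ J : Set ↥Q.E, Q.Indep ↑J ↔ P.Indep ↑(φ.symm '' J) := transport_symm φ hφ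
  have hφ' : ∀ J : Set ↥Q.E, Q.Indep ↑J ↔ P.Indep ↑(φ.symm '' J) := hsymm
  have h1 := transport_mrk_subset φ hφ
  have h2 := transport_mrk_subset φ.symm (fun J => hφ' J)
  rw [mrk, mrk, subset_antisymm h2 h1]

end transport

lemma mapSetEquiv_hphi {γ δ : Type*} (N : Matroid γ) {E' : Set δ} (e : ↥N.E ≃ ↥E') :
    ∀ I : Set ↥N.E, N.Indep ↑I ↔ (N.mapSetEquiv e).Indep ↑(e '' I) := by
  intro I
  rw [Matroid.mapSetEquiv_indep_iff]
  have h1 : (Subtype.val ⁻¹' (Subtype.val '' (e '' I)) : Set ↥E') = e '' I :=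
    Set.preimage_image_eq _ Subtype.val_injective
  rw [h1, Equiv.symm_image_image]
  have h2 : (Subtype.val '' (e '' I) : Set δ) ⊆ E' := by
    rintro x ⟨y, -, rfl⟩
    exact y.2
  rw [and_iff_left h2]

lemma matroid_set_finite {m : ℕ} (S : Set (Matroid (Fin m))) : S.Finite := by
  have : Finite (Matroid (Fin m)) := by
    have hinj : Function.Injective
        (fun M : Matroid (Fin m) => (M.E, M.Indep)) := by
      intro M M' h
      simp only [Prod.mk.injEq] at h
      exact Matroid.ext_indep h.1 (fun I _ => by rw [h.2])
    exact Finite.of_injective _ hinj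
  exact Set.toFinite S


lemma ite_bool_iff {P Q : Prop} [Decidable P] [Decidable Q]
    (h : (if P then true else false) = (if Q then true else false)) : P ↔ Q := by
  by_cases hP : P <;> by_cases hQ : Q <;> simp [hP, hQ] at h ⊢

lemma log_nat_nonneg (m : ℕ) : 0 ≤ Real.log m := by
  cases m with
  | zero => simp
  | succ m => exact Real.log_nonneg (by exact_mod_cast Nat.succ_le_succ (Nat.zero_le m))

lemma transport_base_iff {α β : Type*} {P : Matroid α} {Q : Matroid β} (φ : ↥P.E ≃ ↥Q.E)
    (hφ : ∀ I : Set ↥P.E, P.Indep ↑I ↔ Q.Indep ↑(φ '' I)) (B : Set ↥P.E) :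
    P.IsBase ↑B ↔ Q.IsBase ↑(φ '' B) := by
  refine ⟨transport_base φ hφ B, fun h => ?_⟩
  have h2 := transport_base φ.symm (transport_symm φ hφ) (φ '' B) h
  rwa [Equiv.symm_image_image] at h2

end PavingEnum
end Aux

open PavingEnum


/-- If 𝓜 is a class of matroids closed under contraction and isomorphism, no member
of which of rank r has a circuit of cardinality at most t, and 0 ≤ t ≤ r ≤ n, then
log \tilde m(n,r) ≤ (C(n,r)/C(n−t,r−t)) · log \tilde m(n−t,r−t). -/
theorem class_count_blowup_girth (𝓜 : ∀ ⦃α : Type⦄, Matroid α → Prop)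
    (hcontract : ∀ (α : Type) (M : Matroid α) (C : Set α), 𝓜 M → 𝓜 (mcontract M C))
    (hiso : ∀ (α β : Type) (M : Matroid α) (N : Matroid β), 𝓜 M → MatroidIso M N → 𝓜 N)
    (t r n : ℕ) (htr : t ≤ r) (hrn : r ≤ n)
    (hgirth : ∀ (α : Type) (M : Matroid α), 𝓜 M → mrk M = r →
      ∀ C, PavingEnum.IsCircuit M C → ¬ (C.encard ≤ (t : ℕ∞))) :
    Real.log (classCount 𝓜 n r) ≤
      ((n.choose r : ℝ) / ((n - t).choose (r - t) : ℝ)) *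
        Real.log (classCount 𝓜 (n - t) (r - t)) := by
  classical
  set S1 : Set (Matroid (Fin n)) := {M | 𝓜 M ∧ M.E = Set.univ ∧ mrk M = r} with hS1
  set S2 : Set (Matroid (Fin (n - t))) :=
    {M | 𝓜 M ∧ M.E = Set.univ ∧ mrk M = (r - t)} with hS2
  have hcc1 : classCount 𝓜 n r = S1.ncard := rfl
  have hcc2 : classCount 𝓜 (n - t) (r - t) = S2.ncard := rfl
  rw [hcc1, hcc2]
  rcases Nat.eq_zero_or_pos S1.ncard with h0 | hpos
  · rw [h0]
    simp only [Nat.cast_zero, Real.log_zero]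
    exact mul_nonneg (div_nonneg (Nat.cast_nonneg _) (Nat.cast_nonneg _)) (log_nat_nonneg _)
  have hS1fin := matroid_set_finite S1
  have hS2fin := matroid_set_finite S2
  set k := r.choose t with hk
  have hk0 : 0 < k := Nat.choose_pos htr
  set 𝒯 : Finset (Finset (Fin n)) := Finset.powersetCard t Finset.univ with h𝒯
  set 𝒜 : Finset (Finset (Fin n)) := Finset.powersetCard r Finset.univ with h𝒜
  set FT : Finset (Fin n) → Finset (Finset (Fin n)) :=
    fun T => Finset.univ.filter (fun A => T ⊆ A) with hFT
  have hFTmem : ∀ T A : Finset (Fin n), A ∈ FT T ↔ T ⊆ A := by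
    intro T A
    simp [hFT]
  have h𝒯card : 𝒯.card = n.choose t := by
    rw [h𝒯, Finset.card_powersetCard, Finset.card_univ, Fintype.card_fin]
  have hTcard : ∀ T ∈ 𝒯, T.card = t := fun T hT => (Finset.mem_powersetCard.1 hT).2
  have hcardT : ∀ T, T ∈ 𝒯 → Nat.card ↥((Set.univ : Set (Fin n)) \ ↑T) = n - t := by
    intro T hT
    rw [Nat.card_coe_set_eq, Set.ncard_diff (Set.subset_univ _), Set.ncard_univ,
      Nat.card_eq_fintype_card, Fintype.card_fin, Set.ncard_coe_finset, hTcard T hT]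
  set eqv : (T : Finset (Fin n)) → T ∈ 𝒯 → (↥((Set.univ : Set (Fin n)) \ ↑T) ≃ Fin (n - t)) :=
    fun T hT => Finite.equivFinOfCardEq (hcardT T hT) with heqv
  set encB : Matroid (Fin n) → (Finset (Fin n) → Bool) :=
    fun M A => if M.IsBase (↑A : Set (Fin n)) then true else false with hencB
  set recov : (T : Finset (Fin n)) → T ∈ 𝒯 → Matroid (Fin (n - t)) → (Finset (Fin n) → Option Bool) :=
    fun T hT Q A => if A ∈ FT T
      then some (if Q.IsBase ((fun y : ↥((Set.univ : Set (Fin n)) \ ↑T) => eqv T hT y) ''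
        (Subtype.val ⁻¹' (↑A : Set (Fin n)))) then true else false)
      else none with hrecov
  -- the key contraction step
  have key : ∀ T, (hT : T ∈ 𝒯) → ∀ M ∈ S1,
      ∃ Q ∈ S2, proj (FT T) (encB M) = recov T hT Q := by
    intro T hT M hM
    obtain ⟨h𝓜M, hME, hMr⟩ := hM
    have hTsub : (↑T : Set (Fin n)) ⊆ M.E := by rw [hME]; exact Set.subset_univ _
    have hTenc : (↑T : Set (Fin n)).encard ≤ (t : ℕ∞) := by
      rw [Set.encard_coe_eq_coe_finsetCard, hTcard T hT]
    have hTind : M.Indep ↑T :=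
      indep_of_small (hgirth (Fin n) M h𝓜M hMr) (↑T : Set (Fin n)).ncard _ rfl hTsub
        (Set.toFinite _) hTenc
    set N := mcontract M ↑T with hN
    have hNE : N.E = (Set.univ : Set (Fin n)) \ ↑T := by rw [hN, mcontract_ground, hME]
    have hmem : ∀ x : ↥N.E, (x : Fin n) ∈ (Set.univ : Set (Fin n)) \ ↑T :=
      fun x => hNE ▸ x.2
    set e2 : Fin (n - t) ≃ ↥(Set.univ : Set (Fin (n - t))) :=
      (Equiv.Set.univ (Fin (n - t))).symm with he2
    set eM : ↥N.E ≃ ↥(Set.univ : Set (Fin (n - t))) :=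
      (Equiv.setCongr hNE).trans ((eqv T hT).trans e2) with heM
    set Q := N.mapSetEquiv eM with hQdef
    have hφ := mapSetEquiv_hphi N eM
    have h𝓜Q : 𝓜 Q := hiso (Fin n) (Fin (n - t)) N Q (hcontract (Fin n) M ↑T h𝓜M) ⟨eM, hφ⟩
    obtain ⟨B0, hB0⟩ := N.exists_isBase
    have hB0sub : B0 ⊆ M.E \ ↑T := by
      have h := hB0.subset_ground
      rwa [hNE, ← hME] at h
    have hMB0 : M.IsBase (B0 ∪ ↑T) := (mcontract_base_iff hTind hB0sub).1 hB0
    have hB0card : B0.ncard + t = r := by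
      have hdisj : Disjoint B0 (↑T : Set (Fin n)) := (Set.subset_diff.1 hB0sub).2
      have h := base_ncard_of_mrk hMB0 hMr
      rwa [Set.ncard_union_eq hdisj (Set.toFinite _) (Set.toFinite _),
        Set.ncard_coe_finset, hTcard T hT] at h
    have hNrk : mrk N = r - t := by
      rw [Base_mrk_eq hB0]
      omega
    have hQrk : mrk Q = r - t := by rw [transport_mrk eM hφ, hNrk]
    have hQE : Q.E = Set.univ := rfl
    refine ⟨Q, ⟨h𝓜Q, hQE, hQrk⟩, ?_⟩
    funext A
    by_cases hA : A ∈ FT T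
    · have hTA : (↑T : Set (Fin n)) ⊆ ↑A := Finset.coe_subset.2 ((hFTmem T A).1 hA)
      set BA : Set ↥N.E := Subtype.val ⁻¹' (↑A : Set (Fin n)) with hBA
      have hBAcoe : (Subtype.val '' BA : Set (Fin n)) = ↑A \ ↑T := by
        rw [hBA, Set.image_preimage_eq_inter_range, Subtype.range_coe, hNE]
        ext x
        constructor
        · rintro ⟨hxA, -, hxT⟩; exact ⟨hxA, hxT⟩
        · rintro ⟨hxA, hxT⟩; exact ⟨hxA, trivial, hxT⟩
      have hsub2 : (↑A : Set (Fin n)) \ ↑T ⊆ M.E \ ↑T := by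
        rw [hME]; exact Set.diff_subset_diff_left (Set.subset_univ _)
      have hbase1 := mcontract_base_iff hTind hsub2
      rw [Set.diff_union_of_subset hTA] at hbase1
      have hbase2 : N.IsBase ↑BA ↔ Q.IsBase ↑(eM '' BA) :=
        transport_base_iff (P := N) (Q := Q) eM hφ BA
      have hval : ∀ x : ↥N.E, (Subtype.val (eM x) : Fin (n - t)) = eqv T hT ⟨x.1, hmem x⟩ := by
        intro x
        rw [heM]
        simp only [Equiv.trans_apply]
        have h1 : (Equiv.setCongr hNE) x = ⟨x.1, hmem x⟩ := Subtype.ext rfl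
        rw [h1]
        rfl
      have himg : (Subtype.val '' (eM '' BA) : Set (Fin (n - t))) =
          (fun y : ↥((Set.univ : Set (Fin n)) \ ↑T) => eqv T hT y) ''
            (Subtype.val ⁻¹' (↑A : Set (Fin n))) := by
        ext z
        constructor
        · rintro ⟨w, ⟨x, hx, rfl⟩, rfl⟩
          exact ⟨⟨x.1, hmem x⟩, hx, (hval x).symm⟩
        · rintro ⟨y, hy, rfl⟩
          refine ⟨eM ⟨y.1, hNE.symm ▸ y.2⟩, ⟨⟨y.1, hNE.symm ▸ y.2⟩, hy, rfl⟩, ?_⟩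
          rw [hval ⟨y.1, hNE.symm ▸ y.2⟩]
      have hfinal : (M.IsBase ↑A) ↔
          Q.IsBase ((fun y : ↥((Set.univ : Set (Fin n)) \ ↑T) => eqv T hT y) ''
            (Subtype.val ⁻¹' (↑A : Set (Fin n)))) := by
        rw [← hbase1, ← hBAcoe, hbase2, himg]
      show (if A ∈ FT T then some (encB M A) else none) = _
      rw [if_pos hA, hrecov]
      simp only
      rw [if_pos hA, hencB]
      simp only
      congr 1
      by_cases hb : M.IsBase (↑A : Set (Fin n))
      · rw [if_pos hb, if_pos (hfinal.1 hb)]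
      · rw [if_neg hb, if_neg (fun hc => hb (hfinal.2 hc))]
    · show (if A ∈ FT T then some (encB M A) else none) = _
      rw [if_neg hA, hrecov]
      simp only
      rw [if_neg hA]
  -- finset versions
  set S1F := hS1fin.toFinset with hS1F
  set S2F := hS2fin.toFinset with hS2F
  set SF : Finset (Finset (Fin n) → Bool) := S1F.image encB with hSF
  have hencInj : Set.InjOn encB ↑S1F := by
    intro M hM M' hM' h
    simp only [hS1F, Finset.mem_coe, Set.Finite.mem_toFinset] at hM hM'
    obtain ⟨-, hME, hMr⟩ := hM
    obtain ⟨-, hM'E, hM'r⟩ := hM'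
    refine Matroid.ext_isBase (by rw [hME, hM'E]) ?_
    intro B hBsub
    have hBfin : B.Finite := Set.toFinite _
    have hBc : ((hBfin.toFinset : Finset (Fin n)) : Set (Fin n)) = B := hBfin.coe_toFinset
    have h2 := congrFun h hBfin.toFinset
    simp only [hencB] at h2
    rw [hBc] at h2
    exact ite_bool_iff h2
  have hm_eq : S1.ncard = SF.card := by
    rw [hSF, Finset.card_image_of_injOn hencInj, Set.ncard_eq_toFinset_card _ hS1fin]
  have hagree : ∀ s ∈ SF, ∀ s' ∈ SF, ∀ A, A ∉ 𝒜 → s A = s' A := by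
    have hfalse : ∀ M ∈ S1, ∀ A, A ∉ 𝒜 → encB M A = false := by
      intro M hM A hA
      obtain ⟨-, hME, hMr⟩ := hM
      rw [hencB]
      simp only
      rw [if_neg]
      intro hb
      refine hA ?_
      rw [h𝒜, Finset.mem_powersetCard]
      refine ⟨Finset.subset_univ _, ?_⟩
      have h3 := base_ncard_of_mrk hb hMr
      rwa [Set.ncard_coe_finset] at h3
    intro s hs s' hs' A hA
    obtain ⟨M, hM, rfl⟩ := Finset.mem_image.1 hs
    obtain ⟨M', hM', rfl⟩ := Finset.mem_image.1 hs'
    rw [hfalse M (hS1fin.mem_toFinset.1 hM) A hA, hfalse M' (hS1fin.mem_toFinset.1 hM') A hA]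
  have hcov : ∀ A ∈ 𝒜, k ≤ (𝒯.filter (fun T => A ∈ FT T)).card := by
    intro A hA
    have hAr : A.card = r := (Finset.mem_powersetCard.1 hA).2
    have hfe : 𝒯.filter (fun T => A ∈ FT T) = Finset.powersetCard t A := by
      ext T
      simp only [Finset.mem_filter, Finset.mem_powersetCard, hFTmem, h𝒯]
      constructor
      · rintro ⟨⟨-, hc⟩, hTA⟩; exact ⟨hTA, hc⟩
      · rintro ⟨hTA, hc⟩; exact ⟨⟨Finset.subset_univ _, hc⟩, hTA⟩
    rw [hfe, Finset.card_powersetCard, hAr]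
  have hshear := shearer k hk0 FT 𝒯 𝒜 SF hagree hcov
  have hproj : ∀ T ∈ 𝒯, (SF.image (proj (FT T))).card ≤ S2.ncard := by
    intro T hT
    have hsub : SF.image (proj (FT T)) ⊆ S2F.image (recov T hT) := by
      intro u hu
      obtain ⟨s, hs, rfl⟩ := Finset.mem_image.1 hu
      obtain ⟨M, hM, rfl⟩ := Finset.mem_image.1 hs
      obtain ⟨Q, hQ, hQeq⟩ := key T hT M (hS1fin.mem_toFinset.1 hM)
      rw [hQeq]
      exact Finset.mem_image_of_mem _ (hS2fin.mem_toFinset.2 hQ)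
    calc (SF.image (proj (FT T))).card
        ≤ (S2F.image (recov T hT)).card := Finset.card_le_card hsub
      _ ≤ S2F.card := Finset.card_image_le
      _ = S2.ncard := (Set.ncard_eq_toFinset_card _ hS2fin).symm
  have hm2pos : 0 < S2.ncard := by
    obtain ⟨M, hM⟩ := Set.nonempty_of_ncard_ne_zero (Nat.pos_iff_ne_zero.1 hpos)
    have h𝒯ne : 𝒯.Nonempty := by
      rw [← Finset.card_pos, h𝒯card]
      exact Nat.choose_pos (htr.trans hrn)
    obtain ⟨T, hT⟩ := h𝒯ne
    obtain ⟨Q, hQ, -⟩ := key T hT M hM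
    exact (Set.ncard_pos hS2fin).2 ⟨Q, hQ⟩
  have hchain : (S1.ncard : NNReal) ≤ (S2.ncard : NNReal) ^ ((n.choose t : ℝ) / (k : ℝ)) := by
    calc (S1.ncard : NNReal) = (SF.card : NNReal) := by rw [hm_eq]
      _ ≤ ∏ T ∈ 𝒯, ((SF.image (proj (FT T))).card : NNReal) ^ (1/(k:ℝ)) := hshear
      _ ≤ ∏ _T ∈ 𝒯, ((S2.ncard : NNReal)) ^ (1/(k:ℝ)) := by
          refine Finset.prod_le_prod' fun T hT => ?_
          refine NNReal.rpow_le_rpow ?_ (by positivity)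
          exact_mod_cast hproj T hT
      _ = ((S2.ncard : NNReal) ^ (1/(k:ℝ))) ^ (𝒯.card : ℕ) := by rw [Finset.prod_const]
      _ = (S2.ncard : NNReal) ^ ((n.choose t : ℝ)/(k:ℝ)) := by
          rw [← NNReal.rpow_natCast ((S2.ncard : NNReal) ^ (1/(k:ℝ))) 𝒯.card,
            ← NNReal.rpow_mul, h𝒯card]
          congr 1
          ring
  have hreal : ((S1.ncard : ℕ) : ℝ) ≤ ((S2.ncard : ℕ) : ℝ) ^ ((n.choose t : ℝ)/(k:ℝ)) := by
    have h4 := NNReal.coe_le_coe.2 hchain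
    rwa [NNReal.coe_rpow, NNReal.coe_natCast, NNReal.coe_natCast] at h4
  have hm2R : (1:ℝ) ≤ ((S2.ncard : ℕ) : ℝ) := by exact_mod_cast hm2pos
  have hlog : Real.log (S1.ncard : ℝ) ≤ ((n.choose t : ℝ)/(k:ℝ)) * Real.log (S2.ncard : ℝ) := by
    calc Real.log (S1.ncard : ℝ)
        ≤ Real.log (((S2.ncard : ℕ) : ℝ) ^ ((n.choose t : ℝ)/(k:ℝ))) :=
          Real.log_le_log (by exact_mod_cast hpos) hreal
      _ = ((n.choose t : ℝ)/(k:ℝ)) * Real.log (S2.ncard : ℝ) :=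
          Real.log_rpow (by linarith) _
  have hcoef : ((n.choose t : ℝ))/(k:ℝ) = (n.choose r : ℝ) / ((n - t).choose (r - t) : ℝ) := by
    have hid := Nat.choose_mul (n := n) htr
    have h1 : (0:ℝ) < (k:ℝ) := by exact_mod_cast hk0
    have h2 : (0:ℝ) < ((n - t).choose (r - t) : ℝ) := by
      exact_mod_cast Nat.choose_pos (Nat.sub_le_sub_right hrn t)
    rw [div_eq_div_iff h1.ne' h2.ne']
    rw [hk]
    have h5 : ((n.choose r : ℕ) : ℝ) * ((r.choose t : ℕ) : ℝ)
        = ((n.choose t : ℕ) : ℝ) * (((n - t).choose (r - t) : ℕ) : ℝ) := by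
      exact_mod_cast congrArg (fun x : ℕ => (x : ℝ)) hid
    linarith
  rw [← hcoef]
  exact hlog
end

section
/- For all integers r and n with 3 ≤ r < n, p(n,r) ≥ ( 1 + ( n/r − n/(n−1) ) · C(n,r−1) ) · D(r−1, r, n), the inequality being taken in the real numbers. -/
open Matroid Set Filter Real

namespace PavingEnum

/-- A Steiner system S(r−1, r, n): a collection of r-element subsets (blocks) of
`{1, …, n}` such that every (r−1)-element subset is contained in exactly one block. -/
def IsSteinerSystem (n r : ℕ) (𝓑 : Finset (Finset (Fin n))) : Prop :=
  (∀ B ∈ 𝓑, B.card = r) ∧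
  ∀ T : Finset (Fin n), T.card = r - 1 → ∃! B, B ∈ 𝓑 ∧ T ⊆ B

/-- `numSteiner n r` : the number of Steiner systems S(r−1, r, n). -/
noncomputable def numSteiner (n r : ℕ) : ℕ :=
  {𝓑 : Finset (Finset (Fin n)) | IsSteinerSystem n r 𝓑}.ncard

end PavingEnum

open PavingEnum


namespace PavingProof

open Finset

variable {n r : ℕ}

/-- A "good" family of `r`-sets: all members have size `r`, pairwise intersections have
size at most `r-2`, and some `r`-set is missing. Such a family is the family of
circuit-hyperplanes of a sparse paving matroid of rank `r`. -/
def Good (n r : ℕ) (D : Finset (Finset (Fin n))) : Prop :=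
  (∀ X ∈ D, X.card = r) ∧
  (∀ X ∈ D, ∀ Y ∈ D, X ≠ Y → (X ∩ Y).card + 2 ≤ r) ∧
  (∃ W : Finset (Fin n), W.card = r ∧ W ∉ D)

/-- The independence predicate associated to a good family. -/
def Ind (r : ℕ) (D : Finset (Finset (Fin n))) (I : Set (Fin n)) : Prop :=
  I.ncard ≤ r ∧ ∀ X ∈ D, (X : Set (Fin n)) ≠ I

lemma ind_empty (h3 : 3 ≤ r) (hG : Good n r D) : Ind r D ∅ := by
  constructor
  · simp
  · intro X hX h
    have hc := hG.1 X hX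
    rw [Finset.coe_eq_empty] at h
    simp [h] at hc
    omega

lemma ind_subset (hG : Good n r D) {I J : Set (Fin n)} (hJ : Ind r D J) (hIJ : I ⊆ J) :
    Ind r D I := by
  refine ⟨le_trans (Set.ncard_le_ncard hIJ (Set.toFinite J)) hJ.1, ?_⟩
  intro X hX hXI
  have hIc : I.ncard = r := by rw [← hXI, Set.ncard_coe_finset, hG.1 X hX]
  have hIJ' : I = J := Set.eq_of_subset_of_ncard_le hIJ (by have := hJ.1; omega) (Set.toFinite J)
  exact hJ.2 X hX (hXI.trans hIJ')

lemma ind_aug (h3 : 3 ≤ r) (hG : Good n r D) {I J : Set (Fin n)}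
    (hI : Ind r D I) (hJ : Ind r D J) (hlt : I.ncard < J.ncard) :
    ∃ e ∈ J, e ∉ I ∧ Ind r D (insert e I) := by
  have hnss : ¬ J ⊆ I := fun h => absurd (Set.ncard_le_ncard h (Set.toFinite I)) (by omega)
  obtain ⟨e0, he0J, he0I⟩ := Set.not_subset.1 hnss
  by_cases hsmall : I.ncard + 2 ≤ r
  · refine ⟨e0, he0J, he0I, ?_, ?_⟩
    · rw [Set.ncard_insert_of_notMem he0I (Set.toFinite I)]; omega
    · intro X hX hXeq
      have hc : (insert e0 I).ncard = r := by
        rw [← hXeq, Set.ncard_coe_finset, hG.1 X hX]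
      rw [Set.ncard_insert_of_notMem he0I (Set.toFinite I)] at hc
      omega
  · have hIc : I.ncard + 1 = r := by
      have := hI.1; have := hJ.1; omega
    have hJc : J.ncard = r := by have := hJ.1; omega
    by_contra hcon
    push_neg at hcon
    have hmem : ∀ e, e ∈ J → e ∉ I → ∃ X ∈ D, (X : Set (Fin n)) = insert e I := by
      intro e heJ heI
      have h1 : (insert e I).ncard ≤ r := by
        rw [Set.ncard_insert_of_notMem heI (Set.toFinite I)]; omega
      have h2 := hcon e heJ heI
      by_contra h3'
      push_neg at h3'
      exact h2 ⟨h1, h3'⟩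
    by_cases hone : (J \ I).ncard ≤ 1
    · have hne : e0 ∈ J \ I := ⟨he0J, he0I⟩
      have h1 : (J \ I).ncard = 1 := by
        have : 0 < (J \ I).ncard := (Set.ncard_pos (Set.toFinite _)).2 ⟨e0, hne⟩
        omega
      obtain ⟨e, hee⟩ := Set.ncard_eq_one.1 h1
      have hdu : (J ∩ I) ∪ (J \ I) = J := Set.inter_union_diff J I
      have hcard : (J ∩ I).ncard + (J \ I).ncard = J.ncard := by
        rw [← Set.ncard_union_eq (Set.disjoint_of_subset_left Set.inter_subset_right
          Set.disjoint_sdiff_right) (Set.toFinite _) (Set.toFinite _), hdu]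
      have hJI : J ∩ I = I := by
        apply Set.eq_of_subset_of_ncard_le Set.inter_subset_right ?_ (Set.toFinite I)
        omega
      have heJI : e ∈ J ∧ e ∉ I := by
        have : e ∈ J \ I := hee ▸ Set.mem_singleton e
        exact ⟨this.1, this.2⟩
      have hJeq : J = insert e I := by
        rw [← hdu, hJI, hee]
        rw [Set.union_comm, Set.insert_eq]
      obtain ⟨X, hXD, hXeq⟩ := hmem e heJI.1 heJI.2
      exact hJ.2 X hXD (hXeq.trans hJeq.symm)
    · push_neg at hone
      obtain ⟨e1, e2, he1, he2, hne12⟩ := (Set.one_lt_ncard_iff (Set.toFinite _)).1 hone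
      obtain ⟨X1, hX1D, hX1⟩ := hmem e1 he1.1 he1.2
      obtain ⟨X2, hX2D, hX2⟩ := hmem e2 he2.1 he2.2
      have hX12 : X1 ≠ X2 := by
        intro h
        rw [h, hX2] at hX1
        have : e1 ∈ insert e2 I := hX1 ▸ Set.mem_insert e1 I
        rcases this with h' | h'
        · exact hne12 h'
        · exact he1.2 h'
      have hp := hG.2.1 X1 hX1D X2 hX2D hX12
      have hsub : I ⊆ ((X1 ∩ X2 : Finset (Fin n)) : Set (Fin n)) := by
        intro x hx
        rw [Finset.coe_inter]
        exact ⟨by rw [hX1]; exact Set.mem_insert_of_mem _ hx,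
               by rw [hX2]; exact Set.mem_insert_of_mem _ hx⟩
      have := Set.ncard_le_ncard hsub (Set.toFinite _)
      rw [Set.ncard_coe_finset] at this
      omega

end PavingProof

namespace PavingProof

open Finset

variable {n r : ℕ} {D D1 D2 : Finset (Finset (Fin n))}

/-- The (sparse paving) matroid associated to a good family. -/
noncomputable def matOf (h3 : 3 ≤ r) (hG : Good n r D) : Matroid (Fin n) :=
  (IndepMatroid.ofFinite (Set.finite_univ) (Ind r D)
    (ind_empty h3 hG)
    (fun _ _ hJ hIJ => ind_subset hG hJ hIJ)
    (fun _ _ hI hJ h => ind_aug h3 hG hI hJ h)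
    (fun I _ => Set.subset_univ I)).matroid

lemma matOf_indep (h3 : 3 ≤ r) (hG : Good n r D) {I : Set (Fin n)} :
    (matOf h3 hG).Indep I ↔ Ind r D I := by
  simp [matOf]

lemma matOf_E (h3 : 3 ≤ r) (hG : Good n r D) : (matOf h3 hG).E = Set.univ := by
  simp [matOf]

lemma matOf_base_card (h3 : 3 ≤ r) (hG : Good n r D) (hrn : r < n) {B : Set (Fin n)}
    (hB : (matOf h3 hG).IsBase B) : B.ncard = r := by
  have hind : Ind r D B := (matOf_indep h3 hG).1 hB.indep
  rcases Nat.lt_or_ge B.ncard r with hlt | hge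
  · exfalso
    have hex : ∃ e, e ∉ B ∧ Ind r D (insert e B) := by
      by_cases hsm : B.ncard + 2 ≤ r
      · have hne : B ≠ Set.univ := by
          intro h
          rw [h, Set.ncard_univ, Nat.card_eq_fintype_card, Fintype.card_fin] at hlt
          omega
        obtain ⟨e, he⟩ := (Set.ne_univ_iff_exists_notMem B).1 hne
        refine ⟨e, he, ?_, ?_⟩
        · rw [Set.ncard_insert_of_notMem he (Set.toFinite B)]; omega
        · intro X hX hXeq
          have hc : (insert e B).ncard = r := by
            rw [← hXeq, Set.ncard_coe_finset, hG.1 X hX]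
          rw [Set.ncard_insert_of_notMem he (Set.toFinite B)] at hc
          omega
      · obtain ⟨W, hWc, hWD⟩ := hG.2.2
        have hWind : Ind r D (W : Set (Fin n)) := by
          refine ⟨by rw [Set.ncard_coe_finset, hWc], ?_⟩
          intro X hX h
          rw [Finset.coe_inj] at h
          exact hWD (h ▸ hX)
        obtain ⟨e, _, heB, hi⟩ := ind_aug h3 hG hind hWind
          (by rw [Set.ncard_coe_finset, hWc]; omega)
        exact ⟨e, heB, hi⟩
    obtain ⟨e, heB, hi⟩ := hex
    have hBeq : B = insert e B :=
      hB.eq_of_subset_indep ((matOf_indep h3 hG).2 hi) (Set.subset_insert _ _)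
    exact heB (hBeq ▸ Set.mem_insert e B)
  · exact le_antisymm hind.1 hge

lemma matOf_mrk (h3 : 3 ≤ r) (hG : Good n r D) (hrn : r < n) :
    PavingEnum.mrk (matOf h3 hG) = r := by
  have hset : {k : ℕ | ∃ B, (matOf h3 hG).IsBase B ∧ B.ncard = k} = {r} := by
    ext k
    simp only [Set.mem_setOf_eq, Set.mem_singleton_iff]
    constructor
    · rintro ⟨B, hB, rfl⟩
      exact matOf_base_card h3 hG hrn hB
    · rintro rfl
      obtain ⟨B, hB⟩ := (matOf h3 hG).exists_isBase
      exact ⟨B, hB, matOf_base_card h3 hG hrn hB⟩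
  rw [PavingEnum.mrk, hset, csSup_singleton]

lemma matOf_paving (h3 : 3 ≤ r) (hG : Good n r D) (hrn : r < n) :
    PavingEnum.Paving (matOf h3 hG) := by
  intro C hC
  rw [matOf_mrk h3 hG hrn]
  by_contra hcon
  push_neg at hcon
  have hcc : ((C.ncard : ℕ) : ℕ∞) = C.encard := (Set.toFinite C).cast_ncard_eq
  have hlt : C.ncard < r := by
    rw [← Nat.cast_lt (α := ℕ∞), hcc]
    exact hcon
  have hCind : Ind r D C := by
    refine ⟨by omega, ?_⟩
    intro X hX h
    have := hG.1 X hX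
    rw [← h, Set.ncard_coe_finset] at hlt
    omega
  exact hC.1.1 ((matOf_indep h3 hG).2 hCind)

lemma matOf_mem_of_eq (h3 : 3 ≤ r) (hG1 : Good n r D1) (hG2 : Good n r D2)
    (h : matOf h3 hG1 = matOf h3 hG2) {X : Finset (Fin n)} (hX : X ∈ D1) : X ∈ D2 := by
  have hni : ¬ (matOf h3 hG1).Indep (X : Set (Fin n)) := by
    rw [matOf_indep]
    intro hi
    exact hi.2 X hX rfl
  rw [h, matOf_indep] at hni
  by_contra hX2
  refine hni ⟨by rw [Set.ncard_coe_finset, hG1.1 X hX], ?_⟩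
  intro Y hY hYX
  rw [Finset.coe_inj] at hYX
  exact hX2 (hYX ▸ hY)

lemma matOf_inj (h3 : 3 ≤ r) (hG1 : Good n r D1) (hG2 : Good n r D2)
    (h : matOf h3 hG1 = matOf h3 hG2) : D1 = D2 := by
  ext X
  exact ⟨matOf_mem_of_eq h3 hG1 hG2 h, matOf_mem_of_eq h3 hG2 hG1 h.symm⟩

instance : Finite (Matroid (Fin n)) := by
  refine Finite.of_injective
    (fun M => (M.E, M.Indep) : Matroid (Fin n) → Set (Fin n) × (Set (Fin n) → Prop)) ?_
  intro M N h
  rw [Prod.mk.injEq] at h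
  exact Matroid.ext_indep h.1 (fun I _ => by rw [h.2])

end PavingProof

namespace PavingProof

open Finset PavingEnum

variable {n r : ℕ} {S : Finset (Finset (Fin n))}

lemma steiner_inter (h3 : 3 ≤ r) (hS : IsSteinerSystem n r S) {B1 B2 : Finset (Fin n)}
    (h1 : B1 ∈ S) (h2 : B2 ∈ S) (hne : B1 ≠ B2) : (B1 ∩ B2).card + 2 ≤ r := by
  by_contra h
  push_neg at h
  obtain ⟨T, hTsub, hTc⟩ := Finset.exists_subset_card_eq (s := B1 ∩ B2) (n := r - 1)
    (by omega)
  obtain ⟨B, ⟨hB, hTB⟩, huniq⟩ := hS.2 T hTc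
  have e1 : B1 = B := huniq B1 ⟨h1, hTsub.trans inter_subset_left⟩
  have e2 : B2 = B := huniq B2 ⟨h2, hTsub.trans inter_subset_right⟩
  exact hne (e1.trans e2.symm)

lemma steiner_card (hS : IsSteinerSystem n r S) {B : Finset (Fin n)} (hB : B ∈ S) :
    B.card = r := hS.1 B hB

lemma steiner_nonfull (h3 : 3 ≤ r) (hrn : r < n) (hS : IsSteinerSystem n r S) :
    ∃ W : Finset (Fin n), W.card = r ∧ W ∉ S := by
  obtain ⟨T, hTsub, hTc⟩ := Finset.exists_subset_card_eq (s := (univ : Finset (Fin n))) (n := r - 1)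
    (by rw [card_univ, Fintype.card_fin]; omega)
  obtain ⟨B, ⟨hB, hTB⟩, huniq⟩ := hS.2 T hTc
  have hBc := hS.1 B hB
  have hex : ∃ x, x ∉ B := by
    by_contra h
    push_neg at h
    have : (univ : Finset (Fin n)) ⊆ B := fun x _ => h x
    have := Finset.card_le_card this
    rw [card_univ, Fintype.card_fin] at this
    omega
  obtain ⟨x, hx⟩ := hex
  refine ⟨insert x T, ?_, ?_⟩
  · rw [card_insert_of_notMem (fun h => hx (hTB h)), hTc]; omega
  · intro hmem
    have : insert x T = B := huniq _ ⟨hmem, subset_insert x T⟩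
    exact hx (this ▸ mem_insert_self x T)

lemma steiner_good (h3 : 3 ≤ r) (hrn : r < n) (hS : IsSteinerSystem n r S)
    {E : Finset (Finset (Fin n))} (hE : E ⊆ S) : Good n r (S \ E) := by
  refine ⟨fun X hX => hS.1 X (mem_sdiff.1 hX).1,
    fun X hX Y hY hne => steiner_inter h3 hS (mem_sdiff.1 hX).1 (mem_sdiff.1 hY).1 hne, ?_⟩
  obtain ⟨W, h1, h2⟩ := steiner_nonfull h3 hrn hS
  exact ⟨W, h1, fun h => h2 (mem_sdiff.1 h).1⟩

open scoped Classical in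
/-- Recover a Steiner system from itself minus at most two blocks. -/
noncomputable def recov (n r : ℕ) (D : Finset (Finset (Fin n))) : Finset (Finset (Fin n)) :=
  D ∪ Finset.univ.filter
    (fun X => X.card = r ∧ ∀ T ⊆ X, T.card = r - 1 → ∀ Y ∈ D, ¬ T ⊆ Y)

lemma recov_main (h3 : 3 ≤ r) (hS : IsSteinerSystem n r S) {E : Finset (Finset (Fin n))}
    {X : Finset (Fin n)} (hE : E ⊆ S) (hE2 : E.card ≤ 2) (hXc : X.card = r)
    (hH : ∀ T ⊆ X, T.card = r - 1 → ∀ Y ∈ S \ E, ¬ T ⊆ Y) : X ∈ E := by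
  classical
  have claim1 : ∀ T ⊆ X, T.card = r - 1 → ∃ B ∈ E, T ⊆ B := by
    intro T hTX hTc
    obtain ⟨B, ⟨hB, hTB⟩, _⟩ := hS.2 T hTc
    by_cases hBE : B ∈ E
    · exact ⟨B, hBE, hTB⟩
    · exact absurd hTB (hH T hTX hTc B (mem_sdiff.2 ⟨hB, hBE⟩))
  obtain ⟨T0, hT0X, hT0c⟩ := Finset.exists_subset_card_eq (s := X) (n := r - 1) (by omega)
  obtain ⟨B1, hB1E, hT0B1⟩ := claim1 T0 hT0X hT0c
  have hB1c : B1.card = r := hS.1 B1 (hE hB1E)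
  by_cases hall : ∀ T ⊆ X, T.card = r - 1 → T ⊆ B1
  · have hXB1 : X ⊆ B1 := by
      intro x hx
      obtain ⟨y, hyX, hyx⟩ := Set.Nontrivial.exists_ne (Finset.one_lt_card_iff_nontrivial.1 (by omega : 1 < X.card)) x
      have h1 : (X.erase y) ⊆ X := erase_subset y X
      have h2 : (X.erase y).card = r - 1 := by rw [card_erase_of_mem hyX, hXc]
      exact hall _ h1 h2 (mem_erase.2 ⟨fun h => hyx h.symm, hx⟩)
    have : X = B1 := eq_of_subset_of_card_le hXB1 (by omega)
    rw [this]; exact hB1E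
  · push_neg at hall
    obtain ⟨Tc, hTcX, hTcc, hTcB1⟩ := hall
    obtain ⟨B2, hB2E, hTcB2⟩ := claim1 Tc hTcX hTcc
    have hB2c : B2.card = r := hS.1 B2 (hE hB2E)
    have hB12 : B1 ≠ B2 := fun h => hTcB1 (h ▸ hTcB2)
    have hEeq : ({B1, B2} : Finset (Finset (Fin n))) = E := by
      have hsub : ({B1, B2} : Finset (Finset (Fin n))) ⊆ E := by
        intro Z hZ
        rcases mem_insert.1 hZ with h | h
        · exact h ▸ hB1E
        · exact (mem_singleton.1 h) ▸ hB2E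
      have hc2 : ({B1, B2} : Finset (Finset (Fin n))).card = 2 := card_pair hB12
      exact eq_of_subset_of_card_le hsub (by omega)
    by_contra hXE
    have hXB1' : X ≠ B1 := fun h => hXE (h ▸ hB1E)
    have hXB2' : X ≠ B2 := fun h => hXE (h ▸ hB2E)
    have hii := steiner_inter h3 hS (hE hB1E) (hE hB2E) hB12
    have hb1 : (X ∩ B1).card = r - 1 := by
      have hle : (X ∩ B1).card ≤ r := le_trans (Finset.card_le_card inter_subset_left) (le_of_eq hXc)
      have hge : r - 1 ≤ (X ∩ B1).card := by
        have h' : T0 ⊆ X ∩ B1 := subset_inter hT0X hT0B1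
        have := Finset.card_le_card h'
        omega
      have hne' : (X ∩ B1).card ≠ r := by
        intro h
        have h1 : X ∩ B1 = X := eq_of_subset_of_card_le inter_subset_left (by omega)
        have h2 : X ⊆ B1 := by rw [← h1]; exact inter_subset_right
        exact hXB1' (eq_of_subset_of_card_le h2 (by omega))
      omega
    have hb2 : (X ∩ B2).card = r - 1 := by
      have hle : (X ∩ B2).card ≤ r := le_trans (Finset.card_le_card inter_subset_left) (le_of_eq hXc)
      have hge : r - 1 ≤ (X ∩ B2).card := by
        have h' : Tc ⊆ X ∩ B2 := subset_inter hTcX hTcB2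
        have := Finset.card_le_card h'
        omega
      have hne' : (X ∩ B2).card ≠ r := by
        intro h
        have h1 : X ∩ B2 = X := eq_of_subset_of_card_le inter_subset_left (by omega)
        have h2 : X ⊆ B2 := by rw [← h1]; exact inter_subset_right
        exact hXB2' (eq_of_subset_of_card_le h2 (by omega))
      omega
    have hneq : X ∩ B1 ≠ X ∩ B2 := by
      intro h
      have hsub2 : X ∩ B1 ⊆ B1 ∩ B2 :=
        subset_inter inter_subset_right (h ▸ inter_subset_right)
      have := Finset.card_le_card hsub2
      omega
    have hint : ((X ∩ B1) ∩ (X ∩ B2)).card + 1 ≤ r - 1 := by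
      by_contra h
      push_neg at h
      have h1 : (X ∩ B1) ∩ (X ∩ B2) = X ∩ B1 :=
        eq_of_subset_of_card_le inter_subset_left (by omega)
      have h2 : X ∩ B1 ⊆ X ∩ B2 := by rw [← h1]; exact inter_subset_right
      exact hneq (eq_of_subset_of_card_le h2 (by omega))
    have hu := card_union_add_card_inter (X ∩ B1) (X ∩ B2)
    have husub : (X ∩ B1) ∪ (X ∩ B2) ⊆ X := union_subset inter_subset_left inter_subset_left
    have hule := Finset.card_le_card husub
    have huc : ((X ∩ B1) ∪ (X ∩ B2)).card = r := by omega
    have hintc : ((X ∩ B1) ∩ (X ∩ B2)).card = r - 2 := by omega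
    have hkex : ((X ∩ B1) ∩ (X ∩ B2)).Nonempty := by
      rw [← card_pos]; omega
    obtain ⟨k, hk⟩ := hkex
    have hkX : k ∈ X := (mem_inter.1 (mem_inter.1 hk).1).1
    have hkB1 : k ∈ B1 := (mem_inter.1 (mem_inter.1 hk).1).2
    have hkB2 : k ∈ B2 := (mem_inter.1 (mem_inter.1 hk).2).2
    have haex : ∃ a ∈ X, a ∉ B2 := by
      by_contra h
      push_neg at h
      exact hXB2' (eq_of_subset_of_card_le h (by omega))
    obtain ⟨a, haX, haB2⟩ := haex
    obtain ⟨c, hcTc, hcB1⟩ := Finset.not_subset.1 hTcB1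
    have hcX : c ∈ X := hTcX hcTc
    have hTs : (X.erase k) ⊆ X := erase_subset _ _
    have hTsc : (X.erase k).card = r - 1 := by rw [card_erase_of_mem hkX, hXc]
    obtain ⟨Bs, hBsE, hTBs⟩ := claim1 _ hTs hTsc
    have haT : a ∈ X.erase k := mem_erase.2 ⟨fun h => haB2 (h ▸ hkB2), haX⟩
    have hcT : c ∈ X.erase k := mem_erase.2 ⟨fun h => hcB1 (h ▸ hkB1), hcX⟩
    rw [← hEeq] at hBsE
    rcases mem_insert.1 hBsE with h | h
    · exact hcB1 (h ▸ hTBs hcT)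
    · exact haB2 ((mem_singleton.1 h) ▸ hTBs haT)

lemma recov_eq (h3 : 3 ≤ r) (hS : IsSteinerSystem n r S) {E : Finset (Finset (Fin n))}
    (hE : E ⊆ S) (hE2 : E.card ≤ 2) : recov n r (S \ E) = S := by
  classical
  ext X
  simp only [recov, Finset.mem_union, Finset.mem_filter, Finset.mem_univ, true_and]
  constructor
  · rintro (h | ⟨hXc, hH⟩)
    · exact (mem_sdiff.1 h).1
    · exact hE (recov_main h3 hS hE hE2 hXc hH)
  · intro hXS
    by_cases hXE : X ∈ E
    · right
      refine ⟨hS.1 X hXS, ?_⟩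
      intro T hTX hTc Y hYD hTY
      obtain ⟨B, _, huniq⟩ := hS.2 T hTc
      have h1 : Y = B := huniq Y ⟨(mem_sdiff.1 hYD).1, hTY⟩
      have h2 : X = B := huniq X ⟨hXS, hTX⟩
      have : Y = X := h1.trans h2.symm
      exact (mem_sdiff.1 hYD).2 (this ▸ hXE)
    · left
      exact mem_sdiff.2 ⟨hXS, hXE⟩

end PavingProof

namespace PavingProof

open Finset PavingEnum

variable {n r : ℕ} {S : Finset (Finset (Fin n))}

lemma steiner_count (h3 : 3 ≤ r) (hS : IsSteinerSystem n r S) :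
    S.card * r = n.choose (r - 1) := by
  classical
  have hdisj : ∀ B1 ∈ S, ∀ B2 ∈ S, B1 ≠ B2 →
      Disjoint (B1.powersetCard (r - 1)) (B2.powersetCard (r - 1)) := by
    intro B1 h1 B2 h2 hne
    rw [Finset.disjoint_left]
    intro T hT1 hT2
    rw [Finset.mem_powersetCard] at hT1 hT2
    obtain ⟨B, _, huniq⟩ := hS.2 T hT1.2
    exact hne ((huniq B1 ⟨h1, hT1.1⟩).trans (huniq B2 ⟨h2, hT2.1⟩).symm)
  have hcover : S.biUnion (fun B => B.powersetCard (r - 1)) =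
      (univ : Finset (Fin n)).powersetCard (r - 1) := by
    ext T
    simp only [Finset.mem_biUnion, Finset.mem_powersetCard]
    constructor
    · rintro ⟨B, _, hTB, hTc⟩
      exact ⟨Finset.subset_univ T, hTc⟩
    · rintro ⟨-, hTc⟩
      obtain ⟨B, ⟨hB, hTB⟩, -⟩ := hS.2 T hTc
      exact ⟨B, hB, hTB, hTc⟩
  have h1 : (S.biUnion (fun B => B.powersetCard (r - 1))).card = S.card * r := by
    rw [Finset.card_biUnion hdisj]
    have heach : ∀ B ∈ S, (B.powersetCard (r - 1)).card = r := by
      intro B hB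
      rw [Finset.card_powersetCard, hS.1 B hB,
        ← Nat.choose_symm (by omega : r - 1 ≤ r), (by omega : r - (r - 1) = 1),
        Nat.choose_one_right]
    rw [Finset.sum_congr rfl heach, Finset.sum_const, smul_eq_mul]
  rw [hcover, Finset.card_powersetCard, Finset.card_univ, Fintype.card_fin] at h1
  exact h1.symm

/-- The family of "a Steiner system minus at most two blocks". -/
def famF (S : Finset (Finset (Fin n))) : Finset (Finset (Finset (Fin n))) :=
  (S.powerset.filter (fun E => E.card ≤ 2)).image (fun E => S \ E)

lemma famF_mem {D : Finset (Finset (Fin n))} :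
    D ∈ famF S ↔ ∃ E, E ⊆ S ∧ E.card ≤ 2 ∧ D = S \ E := by
  simp only [famF, Finset.mem_image, Finset.mem_filter, Finset.mem_powerset]
  constructor
  · rintro ⟨E, ⟨h1, h2⟩, h3⟩; exact ⟨E, h1, h2, h3.symm⟩
  · rintro ⟨E, h1, h2, h3⟩; exact ⟨E, ⟨h1, h2⟩, h3.symm⟩

lemma famF_card (S : Finset (Finset (Fin n))) :
    (famF S).card = 1 + S.card + S.card.choose 2 := by
  have hinj : Set.InjOn (fun E => S \ E)
      ↑(S.powerset.filter (fun E => E.card ≤ 2)) := by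
    intro E1 h1 E2 h2 h
    simp only [Finset.coe_filter, Set.mem_setOf_eq, Finset.mem_powerset] at h1 h2
    simp only at h
    have h' : S \ (S \ E1) = S \ (S \ E2) := by rw [h]
    rwa [Finset.sdiff_sdiff_eq_self h1.1, Finset.sdiff_sdiff_eq_self h2.1] at h'
  rw [famF, Finset.card_image_of_injOn hinj]
  have hsplit : S.powerset.filter (fun E => E.card ≤ 2) =
      S.powersetCard 0 ∪ S.powersetCard 1 ∪ S.powersetCard 2 := by
    ext E
    simp only [Finset.mem_filter, Finset.mem_powerset, Finset.mem_union,
      Finset.mem_powersetCard]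
    constructor
    · rintro ⟨h1, h2⟩
      have : E.card = 0 ∨ E.card = 1 ∨ E.card = 2 := by omega
      rcases this with h | h | h
      · exact Or.inl (Or.inl ⟨h1, h⟩)
      · exact Or.inl (Or.inr ⟨h1, h⟩)
      · exact Or.inr ⟨h1, h⟩
    · rintro ((⟨h1, h2⟩ | ⟨h1, h2⟩) | ⟨h1, h2⟩) <;> exact ⟨h1, by omega⟩
  have d01 : Disjoint (S.powersetCard 0) (S.powersetCard 1) := by
    rw [Finset.disjoint_left]
    intro E h1 h2
    rw [Finset.mem_powersetCard] at h1 h2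
    omega
  have d012 : Disjoint (S.powersetCard 0 ∪ S.powersetCard 1) (S.powersetCard 2) := by
    rw [Finset.disjoint_left]
    intro E h1 h2
    rw [Finset.mem_union] at h1
    rw [Finset.mem_powersetCard] at h2
    rcases h1 with h | h <;> (rw [Finset.mem_powersetCard] at h; omega)
  rw [hsplit, Finset.card_union_of_disjoint d012, Finset.card_union_of_disjoint d01,
    Finset.card_powersetCard, Finset.card_powersetCard, Finset.card_powersetCard,
    Nat.choose_zero_right, Nat.choose_one_right]

lemma choose_two_le_choose (n k : ℕ) (h2 : 2 ≤ k) (hk : k + 2 ≤ n) :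
    n.choose 2 ≤ n.choose k := by
  have aux : ∀ j, 2 ≤ j → j ≤ n / 2 → n.choose 2 ≤ n.choose j := by
    intro j
    induction j with
    | zero => omega
    | succ j ih =>
      intro hj2 hjle
      rcases Nat.lt_or_ge 2 (j + 1) with h | h
      · exact (ih (by omega) (by omega)).trans
          (Nat.choose_le_succ_of_lt_half_left (by omega))
      · have hj : j + 1 = 2 := by omega
        rw [hj]
  rcases le_or_gt k (n / 2) with h | h
  · exact aux k h2 h
  · rw [← Nat.choose_symm (by omega : k ≤ n)]
    exact aux (n - k) (by omega) (by omega)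

lemma two_mul_choose_two (b : ℕ) : 2 * b.choose 2 = b * (b - 1) := by
  have hev : 2 ∣ b * (b - 1) := by
    rcases Nat.even_or_odd b with h | h
    · exact Dvd.dvd.mul_right h.two_dvd _
    · have h' : Even (b - 1) := by
        rcases h with ⟨k, hk⟩
        exact ⟨k, by omega⟩
      exact Dvd.dvd.mul_left h'.two_dvd _
  rw [Nat.choose_two_right, Nat.mul_div_cancel' hev]

end PavingProof

namespace PavingProof

open Finset PavingEnum

variable {n r : ℕ} {S : Finset (Finset (Fin n))}

lemma real_ineq (N R Bb Cc C2 : ℝ) (hR3 : 3 ≤ R) (hNR : R + 1 ≤ N) (hB1 : 1 ≤ Bb)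
    (hCc : Bb * R = Cc) (hkey : N * (N - 1) ≤ 2 * Cc) (hC2 : 2 * C2 = Bb * (Bb - 1)) :
    1 + (N / R - N / (N - 1)) * Cc ≤ 1 + Bb + C2 := by
  have hN1pos : (0 : ℝ) < N - 1 := by nlinarith
  have hRpos : (0 : ℝ) < R := by nlinarith
  have hNpos : (0 : ℝ) < N := by nlinarith
  have hBpos : (0 : ℝ) ≤ Bb := by nlinarith
  have hkey2 : 2 * N * (N - 1 - R) ≤ (N - 1) * Bb := by
    have e2 : N * (N - 1) * (N - 1) ≤ 2 * (N - 1) * Cc := by nlinarith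
    have e3 : 2 * R * (2 * N * (N - 1 - R)) ≤ N * (N - 1) * (N - 1) := by
      nlinarith [mul_nonneg hNpos.le (sq_nonneg (2 * R - (N - 1)))]
    have e4 : 2 * R * (2 * N * (N - 1 - R)) ≤ 2 * R * ((N - 1) * Bb) := by
      calc 2 * R * (2 * N * (N - 1 - R)) ≤ N * (N - 1) * (N - 1) := e3
        _ ≤ 2 * (N - 1) * Cc := e2
        _ = 2 * R * ((N - 1) * Bb) := by rw [← hCc]; ring
    exact le_of_mul_le_mul_left e4 (by nlinarith)
  have hfrac : (N / R - N / (N - 1)) * Cc = N * (N - 1 - R) * Bb / (N - 1) := by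
    rw [← hCc]
    field_simp
  rw [hfrac]
  have hmain : N * (N - 1 - R) * Bb / (N - 1) ≤ Bb + C2 := by
    rw [div_le_iff₀ hN1pos]
    nlinarith [mul_le_mul_of_nonneg_right hkey2 hBpos, mul_nonneg hN1pos.le hBpos, hC2]
  linarith

lemma perS_real (h3 : 3 ≤ r) (hrn : r < n) (hS : IsSteinerSystem n r S) :
    1 + ((n : ℝ) / r - (n : ℝ) / ((n : ℝ) - 1)) * (n.choose (r - 1) : ℝ)
      ≤ ((famF S).card : ℝ) := by
  have hbc : S.card * r = n.choose (r - 1) := steiner_count h3 hS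
  have hch : n.choose 2 ≤ n.choose (r - 1) :=
    choose_two_le_choose n (r - 1) (by omega) (by omega)
  have h2c2 : 2 * n.choose 2 = n * (n - 1) := two_mul_choose_two n
  have hFc : (famF S).card = 1 + S.card + S.card.choose 2 := famF_card S
  have hb2 : 2 * S.card.choose 2 = S.card * (S.card - 1) := two_mul_choose_two S.card
  have hb1 : 1 ≤ S.card := by
    by_contra h
    have hb0 : S.card = 0 := by omega
    rw [hb0, zero_mul] at hbc
    have := Nat.choose_pos (show r - 1 ≤ n by omega)
    omega
  have hR3 : (3 : ℝ) ≤ (r : ℝ) := by exact_mod_cast h3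
  have hNR : (r : ℝ) + 1 ≤ (n : ℝ) := by exact_mod_cast hrn
  have hB1 : (1 : ℝ) ≤ (S.card : ℝ) := by exact_mod_cast hb1
  have hCc : (S.card : ℝ) * (r : ℝ) = (n.choose (r - 1) : ℝ) := by exact_mod_cast hbc
  have hkey : (n : ℝ) * ((n : ℝ) - 1) ≤ 2 * (n.choose (r - 1) : ℝ) := by
    have h1 : (n * (n - 1) : ℕ) ≤ 2 * n.choose (r - 1) := by omega
    calc (n : ℝ) * ((n : ℝ) - 1) = ((n * (n - 1) : ℕ) : ℝ) := by
          push_cast [Nat.cast_sub (by omega : 1 ≤ n)]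
          ring
      _ ≤ ((2 * n.choose (r - 1) : ℕ) : ℝ) := by exact_mod_cast h1
      _ = 2 * (n.choose (r - 1) : ℝ) := by push_cast; ring
  have hch2R : 2 * (S.card.choose 2 : ℝ) = (S.card : ℝ) * ((S.card : ℝ) - 1) := by
    calc 2 * (S.card.choose 2 : ℝ) = ((2 * S.card.choose 2 : ℕ) : ℝ) := by push_cast; ring
      _ = ((S.card * (S.card - 1) : ℕ) : ℝ) := by rw [hb2]
      _ = (S.card : ℝ) * ((S.card : ℝ) - 1) := by
          push_cast [Nat.cast_sub hb1]
          ring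
  rw [hFc]
  push_cast
  have := real_ineq (n : ℝ) (r : ℝ) (S.card : ℝ) (n.choose (r - 1) : ℝ)
    (S.card.choose 2 : ℝ) hR3 hNR hB1 hCc hkey hch2R
  linarith

end PavingProof


open PavingEnum PavingProof in
/-- For 3 ≤ r < n, p(n,r) ≥ (1 + (n/r − n/(n−1)) · C(n,r−1)) · D(r−1, r, n). -/
theorem paving_vs_steiner (n r : ℕ) (hr : 3 ≤ r) (hrn : r < n) :
    (1 + ((n : ℝ) / r - (n : ℝ) / ((n : ℝ) - 1)) * (n.choose (r - 1) : ℝ)) *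
        (numSteiner n r : ℝ) ≤ (numPaving n r : ℝ) := by
  classical
  set c : ℝ := 1 + ((n : ℝ) / r - (n : ℝ) / ((n : ℝ) - 1)) * (n.choose (r - 1) : ℝ) with hc
  set SS : Finset (Finset (Finset (Fin n))) :=
    Finset.univ.filter (fun S => IsSteinerSystem n r S) with hSSdef
  have hmemSS : ∀ S, S ∈ SS ↔ IsSteinerSystem n r S := by
    intro S
    simp [hSSdef]
  have hD : (numSteiner n r : ℝ) = (SS.card : ℝ) := by
    norm_cast
    rw [numSteiner]
    have hset : {B : Finset (Finset (Fin n)) | IsSteinerSystem n r B} = ↑SS := by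
      ext B
      simp [hmemSS]
    rw [hset, Set.ncard_coe_finset]
  have hdisjF : ∀ S1 ∈ SS, ∀ S2 ∈ SS, S1 ≠ S2 → Disjoint (famF S1) (famF S2) := by
    intro S1 h1 S2 h2 hne
    rw [Finset.disjoint_left]
    intro D hD1 hD2
    obtain ⟨E1, hE1, hE12, rfl⟩ := famF_mem.1 hD1
    obtain ⟨E2, hE2, hE22, heq⟩ := famF_mem.1 hD2
    have r1 := recov_eq hr ((hmemSS S1).1 h1) hE1 hE12
    have r2 := recov_eq hr ((hmemSS S2).1 h2) hE2 hE22
    rw [← heq] at r2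
    exact hne (r1.symm.trans r2)
  set U : Finset (Finset (Finset (Fin n))) := SS.biUnion famF with hUdef
  have hUcard : U.card = ∑ S ∈ SS, (famF S).card := Finset.card_biUnion hdisjF
  have hUgood : ∀ D ∈ U, Good n r D := by
    intro D hDU
    rw [hUdef, Finset.mem_biUnion] at hDU
    obtain ⟨S, hs, hDS⟩ := hDU
    obtain ⟨E, hE, hE2, rfl⟩ := famF_mem.1 hDS
    exact steiner_good hr hrn ((hmemSS S).1 hs) hE
  set g : Finset (Finset (Fin n)) → Matroid (Fin n) :=
    fun D => if h : Good n r D then matOf hr h else Matroid.emptyOn (Fin n) with hg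
  have hginj : Set.InjOn g ↑U := by
    intro D1 h1 D2 h2 heq
    have hg1 := hUgood D1 (Finset.mem_coe.1 h1)
    have hg2 := hUgood D2 (Finset.mem_coe.1 h2)
    rw [hg] at heq
    simp only [dif_pos hg1, dif_pos hg2] at heq
    exact matOf_inj hr hg1 hg2 heq
  have himg : g '' ↑U ⊆ {M : Matroid (Fin n) | M.E = Set.univ ∧ mrk M = r ∧ Paving M} := by
    rintro M ⟨D, hDU, rfl⟩
    have hgd := hUgood D (Finset.mem_coe.1 hDU)
    rw [hg]
    simp only [dif_pos hgd, Set.mem_setOf_eq]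
    exact ⟨matOf_E hr hgd, matOf_mrk hr hgd hrn, matOf_paving hr hgd hrn⟩
  have hUP : (U.card : ℝ) ≤ (numPaving n r : ℝ) := by
    have h1 : U.card ≤ numPaving n r := by
      rw [numPaving]
      calc U.card = (↑U : Set (Finset (Finset (Fin n)))).ncard :=
            (Set.ncard_coe_finset U).symm
        _ = (g '' ↑U).ncard := (Set.ncard_image_of_injOn hginj).symm
        _ ≤ _ := Set.ncard_le_ncard himg (Set.toFinite _)
    exact_mod_cast h1
  have hperS : ∀ S ∈ SS, c ≤ ((famF S).card : ℝ) := by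
    intro S hs
    rw [hc]
    exact perS_real hr hrn ((hmemSS S).1 hs)
  have hsum : c * (SS.card : ℝ) ≤ (U.card : ℝ) := by
    calc c * (SS.card : ℝ) = ∑ _S ∈ SS, c := by
          rw [Finset.sum_const, nsmul_eq_mul, mul_comm]
      _ ≤ ∑ S ∈ SS, ((famF S).card : ℝ) := Finset.sum_le_sum hperS
      _ = (U.card : ℝ) := by
          rw [hUcard]
          push_cast
          ring
  rw [hD]
  exact hsum.trans hUP
end

section
/- Let E be a finite set of cardinality n, let 0 < r < n, and let 𝓑 be a collection of r-element subsets of E. Then 𝓑 is the collection of bases of a sparse paving matroid on E of rank r if and only if the complement of 𝓑 in the set of all r-element subsets of E is a stable set in the Johnson graph J(E,r). -/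
open Matroid Set Filter Real

open PavingEnum

section Aux

variable {α : Type*}

lemma mrk_eq_of_forall {M : Matroid α} {r : ℕ}
    (h : ∀ B, M.IsBase B → B.ncard = r) : mrk M = r := by
  obtain ⟨B, hB⟩ := M.exists_isBase
  have hset : {n : ℕ | ∃ B, M.IsBase B ∧ B.ncard = n} = {r} := by
    ext n
    simp only [Set.mem_setOf_eq, Set.mem_singleton_iff]
    constructor
    · rintro ⟨B', hB', rfl⟩; exact h B' hB'
    · rintro rfl; exact ⟨B, hB, h B hB⟩
  rw [mrk, hset, csSup_singleton]

lemma base_ncard {M : Matroid α} {r : ℕ} (hr : mrk M = r)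
    {B : Set α} (hB : M.IsBase B) : B.ncard = r := by
  have h : ∀ B', M.IsBase B' → B'.ncard = B.ncard := fun B' hB' =>
    hB'.ncard_eq_ncard_of_isBase hB
  rw [← hr, mrk_eq_of_forall h]

lemma exists_circuit_subset [Finite α] {M : Matroid α} :
    ∀ (k : ℕ) (D : Set α), D.ncard ≤ k → M.Dep D → ∃ C, C ⊆ D ∧ PavingEnum.IsCircuit M C := by
  intro k
  induction k with
  | zero =>
    intro D hD hdep
    have : D = ∅ := by
      rw [← Set.ncard_eq_zero (Set.toFinite D)]; omega
    exact absurd (this ▸ M.empty_indep) hdep.not_indep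
  | succ k ih =>
    intro D hD hdep
    by_cases h : ∀ D', D' ⊂ D → M.Indep D'
    · exact ⟨D, subset_rfl, hdep, h⟩
    · push_neg at h
      obtain ⟨D', hss, hnind⟩ := h
      have hdep' : M.Dep D' := ⟨hnind, hss.subset.trans hdep.subset_ground⟩
      have hcard : D'.ncard ≤ k := by
        have := Set.ncard_lt_ncard hss (Set.toFinite D)
        omega
      obtain ⟨C, hC, hcirc⟩ := ih D' hcard hdep'
      exact ⟨C, hC.trans hss.subset, hcirc⟩

lemma weak_elim [Finite α] {M : Matroid α} {C₁ C₂ : Set α} {e : α}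
    (h₁ : PavingEnum.IsCircuit M C₁) (h₂ : PavingEnum.IsCircuit M C₂) (hne : C₁ ≠ C₂) (he : e ∈ C₁ ∩ C₂) :
    M.Dep ((C₁ ∪ C₂) \ {e}) := by
  set X := C₁ ∪ C₂ with hX
  have hXE : X ⊆ M.E := Set.union_subset h₁.1.subset_ground h₂.1.subset_ground
  rcases M.indep_or_dep ((Set.diff_subset).trans hXE) with hW | hW
  swap
  · exact hW
  exfalso
  have hf : (C₂ \ C₁).Nonempty := by
    rw [Set.diff_nonempty]
    intro hsub
    exact h₂.1.not_indep (h₁.2 _ (hsub.ssubset_of_ne hne.symm))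
  obtain ⟨f, hf2, hf1⟩ := hf
  have hC2f : M.Indep (C₂ \ {f}) :=
    h₂.2 _ (Set.sdiff_singleton_ssubset.mpr hf2)
  obtain ⟨J, hJ, hsubJ⟩ := hC2f.subset_isBasis_of_subset
    ((Set.diff_subset).trans subset_union_right) hXE
  have hfJ : f ∉ J := by
    intro hfJ
    have hsub : C₂ ⊆ J := by
      intro z hz
      by_cases hzf : z = f
      · rwa [hzf]
      · exact hsubJ ⟨hz, hzf⟩
    exact h₂.1.not_indep (hJ.indep.subset hsub)
  have hg : ∃ g ∈ C₁, g ∉ J := by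
    by_contra h
    push_neg at h
    exact h₁.1.not_indep (hJ.indep.subset h)
  obtain ⟨g, hgC1, hgJ⟩ := hg
  have hgf : g ≠ f := fun h => hf1 (h ▸ hgC1)
  have hJsub : J ⊆ X \ {f, g} := by
    intro z hz
    refine ⟨hJ.subset hz, ?_⟩
    simp only [Set.mem_insert_iff, Set.mem_singleton_iff]
    rintro (rfl | rfl)
    exacts [hfJ hz, hgJ hz]
  have hfgX : ({f, g} : Set α) ⊆ X := by
    intro z hz
    rcases hz with rfl | hz
    · exact Set.mem_union_right _ hf2
    · rw [Set.mem_singleton_iff] at hz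
      subst hz
      exact Set.mem_union_left _ hgC1
  have hX2 : 2 ≤ X.ncard := by
    have := Set.ncard_le_ncard hfgX (Set.toFinite X)
    rwa [Set.ncard_pair hgf.symm] at this
  have hcardJ : J.ncard ≤ X.ncard - 2 := by
    calc J.ncard ≤ (X \ ({f, g} : Set α)).ncard :=
          Set.ncard_le_ncard hJsub (Set.toFinite _)
      _ = X.ncard - 2 := by
          rw [Set.ncard_diff hfgX, Set.ncard_pair hgf.symm]
  have heX : e ∈ X := Set.mem_union_left _ he.1
  have hcardW : (X \ {e}).ncard = X.ncard - 1 := by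
    rw [Set.ncard_diff (by simpa using heX), Set.ncard_singleton]
  have hlt : J.encard < (X \ {e}).encard := by
    rw [← Set.Finite.cast_ncard_eq (Set.toFinite J),
      ← Set.Finite.cast_ncard_eq (Set.toFinite (X \ {e}))]
    exact_mod_cast by omega
  obtain ⟨x, hx, hind⟩ := hJ.indep.augment hW hlt
  exact hx.2 (hJ.mem_of_insert_indep ((Set.diff_subset) hx.1) hind)

end Aux

section Forward

variable {α : Type*} [Fintype α] [DecidableEq α]

lemma forward_dir {n r : ℕ} (hcard : Fintype.card α = n) (hr0 : 0 < r) (hrn : r < n)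
    {𝓑 : Finset (Finset α)} (h𝓑 : ∀ B ∈ 𝓑, B.card = r)
    {M : Matroid α} (hE : M.E = Set.univ) (hrk : mrk M = r) (hsp : SparsePaving M)
    (hbase : ∀ B : Finset α, M.IsBase ↑B ↔ B ∈ 𝓑) :
    ∀ X Y : Finset α, X.card = r → Y.card = r → X ∉ 𝓑 → Y ∉ 𝓑 →
      (X ∩ Y).card ≠ r - 1 := by
  intro X Y hXr hYr hXB hYB hXY
  have hXne : X ≠ Y := by
    rintro rfl
    rw [Finset.inter_self, hXr] at hXY
    omega
  have hdep : ∀ Z : Finset α, Z.card = r → Z ∉ 𝓑 → M.Dep (↑Z : Set α) := by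
    intro Z hZr hZB
    have hZE : (↑Z : Set α) ⊆ M.E := by rw [hE]; exact Set.subset_univ _
    rcases M.indep_or_dep hZE with hind | hd
    · exfalso
      obtain ⟨B, hB, hZB'⟩ := hind.exists_isBase_superset
      have hBr : B.ncard = r := base_ncard hrk hB
      have hZBeq : (↑Z : Set α) = B := by
        apply Set.eq_of_subset_of_ncard_le hZB' ?_ (Set.toFinite B)
        rw [hBr, Set.ncard_coe_finset, hZr]
      rw [← hZBeq] at hB
      exact hZB ((hbase Z).mp hB)
    · exact hd
  have hcirc : ∀ Z : Finset α, Z.card = r → Z ∉ 𝓑 → PavingEnum.IsCircuit M (↑Z : Set α) := by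
    intro Z hZr hZB
    refine ⟨hdep Z hZr hZB, fun D hD => ?_⟩
    rcases M.indep_or_dep (hD.subset.trans ((hdep Z hZr hZB).subset_ground)) with h | h
    · exact h
    exfalso
    obtain ⟨C, hCD, hC⟩ := exists_circuit_subset (D.ncard) D le_rfl h
    have hpav := hsp.1 C hC
    rw [hrk] at hpav
    have hCc : C.encard < (r : ℕ∞) := by
      have h1 : C.encard ≤ D.encard := Set.encard_mono hCD
      have h2 : D.encard < (↑Z : Set α).encard :=
        Set.Finite.encard_lt_encard (Set.toFinite _) hD
      have h3 : (↑Z : Set α).encard = r := by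
        rw [Set.encard_coe_eq_coe_finsetCard, hZr]
      exact h3 ▸ lt_of_le_of_lt h1 h2
    exact absurd (lt_of_le_of_lt hpav hCc) (lt_irrefl _)
  have hXc := hcirc X hXr hXB
  have hYc := hcirc Y hYr hYB
  have hcoene : (↑X : Set α) ≠ ↑Y := fun h => hXne (Finset.coe_injective h)
  set U : Set α := ↑X ∪ ↑Y with hU
  have hUeq : U = (↑(X ∪ Y) : Set α) := by rw [hU, Finset.coe_union]
  have hUcard : U.ncard = r + 1 := by
    rw [hUeq, Set.ncard_coe_finset]
    have := Finset.card_union_add_card_inter X Y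
    omega
  have hnobase : ∀ B : Set α, M.IsBase B → ¬B ⊆ U := by
    intro B hB hBU
    have hBr : B.ncard = r := base_ncard hrk hB
    have hne' : (U \ B).Nonempty := by
      rw [Set.diff_nonempty]
      intro hsub
      have := Set.ncard_le_ncard hsub (Set.toFinite B)
      omega
    obtain ⟨e, heU, heB⟩ := hne'
    have hBeq : B = U \ {e} := by
      apply Set.eq_of_subset_of_ncard_le
      · intro z hz
        exact ⟨hBU hz, fun h => heB (h ▸ hz)⟩
      · rw [Set.ncard_diff (Set.singleton_subset_iff.mpr heU), Set.ncard_singleton,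
          hUcard, hBr]
        omega
      · exact Set.toFinite _
    by_cases heX : e ∈ (↑X : Set α)
    · by_cases heY : e ∈ (↑Y : Set α)
      · have hWdep := weak_elim hXc hYc hcoene ⟨heX, heY⟩
        rw [← hU, ← hBeq] at hWdep
        exact hWdep.not_indep hB.indep
      · have hYsub : (↑Y : Set α) ⊆ B := by
          rw [hBeq]
          exact fun z hz => ⟨Set.mem_union_right _ hz, fun h => heY (h ▸ hz)⟩
        exact (hdep Y hYr hYB).not_indep (hB.indep.subset hYsub)
    · have hXsub : (↑X : Set α) ⊆ B := by
        rw [hBeq]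
        exact fun z hz => ⟨Set.mem_union_left _ hz, fun h => heX (h ▸ hz)⟩
      exact (hdep X hXr hXB).not_indep (hB.indep.subset hXsub)
  have hDdep : M✶.Dep (Set.univ \ U) := by
    rw [Matroid.dep_iff]
    constructor
    · intro hind
      rw [Matroid.dual_indep_iff_exists (by rw [hE]; exact Set.subset_univ _)] at hind
      obtain ⟨B, hB, hdisj⟩ := hind
      apply hnobase B hB
      intro z hz
      by_contra hzU
      exact Set.disjoint_left.mp hdisj ⟨Set.mem_univ z, hzU⟩ hz
    · rw [Matroid.dual_ground, hE]
      exact Set.subset_univ _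
  have hdualrk : mrk M✶ = n - r := by
    apply mrk_eq_of_forall
    intro B hB
    rw [Matroid.dual_isBase_iff (by simpa using hB.subset_ground)] at hB
    have h1 : (M.E \ B).ncard = r := base_ncard hrk hB
    rw [hE] at h1
    have hBsub : B ⊆ Set.univ := Set.subset_univ _
    have h2 : (Set.univ \ B).ncard = (Set.univ : Set α).ncard - B.ncard :=
      Set.ncard_diff hBsub (Set.toFinite _)
    have h3 : (Set.univ : Set α).ncard = n := by
      rw [Set.ncard_univ, Nat.card_eq_fintype_card, hcard]
    have hBle : B.ncard ≤ n := by
      rw [← h3]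
      exact Set.ncard_le_ncard hBsub (Set.toFinite _)
    omega
  obtain ⟨C', hC'D, hC'⟩ := exists_circuit_subset ((Set.univ \ U).ncard) _ le_rfl hDdep
  have hpav := hsp.2 C' hC'
  rw [hdualrk] at hpav
  have hUuniv : U ⊆ Set.univ := Set.subset_univ _
  have hDcard : (Set.univ \ U).ncard = n - (r + 1) := by
    rw [Set.ncard_diff hUuniv (Set.toFinite _), hUcard, Set.ncard_univ,
      Nat.card_eq_fintype_card, hcard]
  have hC'le : C'.encard ≤ ((n - (r + 1) : ℕ) : ℕ∞) := by
    rw [← hDcard, ← Set.Finite.cast_ncard_eq (Set.toFinite C')]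
    exact_mod_cast Set.ncard_le_ncard hC'D (Set.toFinite _)
  have hfinal : ((n - r : ℕ) : ℕ∞) ≤ ((n - (r + 1) : ℕ) : ℕ∞) := le_trans hpav hC'le
  rw [Nat.cast_le] at hfinal
  omega

end Forward

section Backward

variable {α : Type*} [Fintype α] [DecidableEq α]

lemma extend_lemma {n r : ℕ} (hcard : Fintype.card α = n) (hr0 : 0 < r) (hrn : r < n)
    {𝓑 : Finset (Finset α)}
    (hst : ∀ X Y : Finset α, X.card = r → Y.card = r → X ∉ 𝓑 → Y ∉ 𝓑 →
      (X ∩ Y).card ≠ r - 1)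
    (S : Finset α) (hS : S.card = r - 1) : ∃ B ∈ 𝓑, S ⊆ B := by
  have hSc : 2 ≤ Sᶜ.card := by
    rw [Finset.card_compl, hS, hcard]
    omega
  obtain ⟨T, hTsub, hT2⟩ := Finset.exists_subset_card_eq hSc
  rw [Finset.card_eq_two] at hT2
  obtain ⟨a, b, hab, rfl⟩ := hT2
  have haS : a ∉ S := by
    have := hTsub (Finset.mem_insert_self a {b})
    simpa [Finset.mem_compl] using this
  have hbS : b ∉ S := by
    have := hTsub (by simp : b ∈ ({a, b} : Finset α))
    simpa [Finset.mem_compl] using this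
  have hcardA : (insert a S).card = r := by
    rw [Finset.card_insert_of_notMem haS, hS]
    omega
  have hcardB : (insert b S).card = r := by
    rw [Finset.card_insert_of_notMem hbS, hS]
    omega
  by_cases hA : insert a S ∈ 𝓑
  · exact ⟨_, hA, Finset.subset_insert _ _⟩
  by_cases hB : insert b S ∈ 𝓑
  · exact ⟨_, hB, Finset.subset_insert _ _⟩
  exfalso
  apply hst _ _ hcardA hcardB hA hB
  have hint : insert a S ∩ insert b S = S := by
    ext z
    simp only [Finset.mem_inter, Finset.mem_insert]
    constructor
    · rintro ⟨rfl | hz, hz2⟩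
      · rcases hz2 with rfl | hz2
        · exact absurd rfl hab
        · exact absurd hz2 haS
      · exact hz
    · exact fun hz => ⟨Or.inr hz, Or.inr hz⟩
  rw [hint, hS]

lemma contain_lemma {n r : ℕ} (hcard : Fintype.card α = n) (hr0 : 0 < r) (hrn : r < n)
    {𝓑 : Finset (Finset α)}
    (hst : ∀ X Y : Finset α, X.card = r → Y.card = r → X ∉ 𝓑 → Y ∉ 𝓑 →
      (X ∩ Y).card ≠ r - 1)
    (T : Finset α) (hT : T.card = r + 1) : ∃ B ∈ 𝓑, B ⊆ T := by
  obtain ⟨P, hPsub, hP2⟩ := Finset.exists_subset_card_eq (show 2 ≤ T.card by omega)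
  rw [Finset.card_eq_two] at hP2
  obtain ⟨a, b, hab, rfl⟩ := hP2
  have haT : a ∈ T := hPsub (by simp)
  have hbT : b ∈ T := hPsub (by simp)
  have hcA : (T.erase a).card = r := by rw [Finset.card_erase_of_mem haT, hT]; omega
  have hcB : (T.erase b).card = r := by rw [Finset.card_erase_of_mem hbT, hT]; omega
  by_cases hA : T.erase a ∈ 𝓑
  · exact ⟨_, hA, Finset.erase_subset _ _⟩
  by_cases hB : T.erase b ∈ 𝓑
  · exact ⟨_, hB, Finset.erase_subset _ _⟩
  exfalso
  apply hst _ _ hcA hcB hA hB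
  have hint : T.erase a ∩ T.erase b = T \ {a, b} := by
    ext z
    simp only [Finset.mem_inter, Finset.mem_erase, Finset.mem_sdiff, Finset.mem_insert,
      Finset.mem_singleton]
    tauto
  rw [hint, Finset.card_sdiff_of_subset (by
    intro z hz
    rcases Finset.mem_insert.mp hz with rfl | hz
    · exact haT
    · rw [Finset.mem_singleton] at hz
      exact hz ▸ hbT), Finset.card_pair hab, hT]
  omega

lemma exch_lemma {n r : ℕ} (hcard : Fintype.card α = n) (hr0 : 0 < r) (hrn : r < n)
    {𝓑 : Finset (Finset α)} (h𝓑 : ∀ B ∈ 𝓑, B.card = r)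
    (hst : ∀ X Y : Finset α, X.card = r → Y.card = r → X ∉ 𝓑 → Y ∉ 𝓑 →
      (X ∩ Y).card ≠ r - 1)
    {B1 B2 : Finset α} (h1 : B1 ∈ 𝓑) (h2 : B2 ∈ 𝓑) {x : α} (hx : x ∈ B1 \ B2) :
    ∃ y ∈ B2 \ B1, insert y (B1.erase x) ∈ 𝓑 := by
  by_contra hcon
  push_neg at hcon
  obtain ⟨hxB1, hxB2⟩ := Finset.mem_sdiff.mp hx
  have hC : (B1.erase x).card = r - 1 := by
    rw [Finset.card_erase_of_mem hxB1, h𝓑 B1 h1]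
  have hxC : x ∉ B1.erase x := Finset.notMem_erase _ _
  have hne : (B2 \ B1).Nonempty := by
    rw [Finset.sdiff_nonempty]
    intro hsub
    have heq : B2 = B1 := Finset.eq_of_subset_of_card_le hsub
      (by rw [h𝓑 B1 h1, h𝓑 B2 h2])
    exact hxB2 (heq ▸ hxB1)
  obtain ⟨y, hy⟩ := hne
  obtain ⟨hyB2, hyB1⟩ := Finset.mem_sdiff.mp hy
  have hcardIns : ∀ z, z ∉ B1 → (insert z (B1.erase x)).card = r := by
    intro z hz
    rw [Finset.card_insert_of_notMem (fun h => hz (Finset.erase_subset _ _ h)), hC]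
    omega
  by_cases h2' : ∃ y' ∈ B2 \ B1, y' ≠ y
  · obtain ⟨y', hy', hyy'⟩ := h2'
    obtain ⟨hy'B2, hy'B1⟩ := Finset.mem_sdiff.mp hy'
    apply hst _ _ (hcardIns y hyB1) (hcardIns y' hy'B1) (hcon y hy) (hcon y' hy')
    have hint : insert y (B1.erase x) ∩ insert y' (B1.erase x) = B1.erase x := by
      ext z
      simp only [Finset.mem_inter, Finset.mem_insert]
      constructor
      · rintro ⟨rfl | hz, hz2⟩
        · rcases hz2 with rfl | hz2
          · exact absurd rfl hyy'.symm
          · exact hz2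
        · exact hz
      · exact fun hz => ⟨Or.inr hz, Or.inr hz⟩
    rw [hint, hC]
  · push_neg at h2'
    have hBd : B2 \ B1 = {y} := by
      ext z
      rw [Finset.mem_singleton]
      constructor
      · exact fun hz => h2' z hz
      · rintro rfl; exact hy
    have hc2 : (B2 \ B1).card = 1 := by rw [hBd, Finset.card_singleton]
    have hc1 : (B1 \ B2).card = 1 := by
      have e1 := Finset.card_sdiff_add_card_inter B1 B2
      have e2 := Finset.card_sdiff_add_card_inter B2 B1
      rw [h𝓑 B1 h1] at e1
      rw [h𝓑 B2 h2, Finset.inter_comm] at e2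
      omega
    have hB1x : B1 \ B2 = {x} := by
      obtain ⟨w, hw⟩ := Finset.card_eq_one.mp hc1
      rw [hw] at hx ⊢
      rw [Finset.mem_singleton] at hx
      rw [hx]
    have hB2eq : B2 = insert y (B1.erase x) := by
      ext z
      simp only [Finset.mem_insert, Finset.mem_erase]
      constructor
      · intro hz
        by_cases hzB1 : z ∈ B1
        · refine Or.inr ⟨?_, hzB1⟩
          rintro rfl
          exact hxB2 hz
        · left
          have : z ∈ B2 \ B1 := Finset.mem_sdiff.mpr ⟨hz, hzB1⟩
          rw [hBd, Finset.mem_singleton] at this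
          exact this
      · rintro (rfl | ⟨hzx, hzB1⟩)
        · exact hyB2
        · by_contra hzB2
          have : z ∈ B1 \ B2 := Finset.mem_sdiff.mpr ⟨hzB1, hzB2⟩
          rw [hB1x, Finset.mem_singleton] at this
          exact hzx this
    exact hcon y hy (hB2eq ▸ h2)

lemma cleanup_lemma {n r : ℕ} (hcard : Fintype.card α = n) (hr0 : 0 < r) (hrn : r < n)
    {𝓑 : Finset (Finset α)} (h𝓑 : ∀ B ∈ 𝓑, B.card = r)
    (hst : ∀ X Y : Finset α, X.card = r → Y.card = r → X ∉ 𝓑 → Y ∉ 𝓑 →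
      (X ∩ Y).card ≠ r - 1) :
    ∀ (k : ℕ) (B B' I : Finset α), B ∈ 𝓑 → B' ∈ 𝓑 → I ⊆ B →
      (B \ (I ∪ B')).card ≤ k → ∃ B'' ∈ 𝓑, I ⊆ B'' ∧ B'' ⊆ I ∪ B' := by
  intro k
  induction k with
  | zero =>
    intro B B' I hB hB' hIB hc
    have h0 : B \ (I ∪ B') = ∅ := Finset.card_eq_zero.mp (Nat.le_zero.mp hc)
    exact ⟨B, hB, hIB, Finset.sdiff_eq_empty_iff_subset.mp h0⟩
  | succ k ih =>
    intro B B' I hB hB' hIB hc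
    by_cases h0 : B \ (I ∪ B') = ∅
    · exact ⟨B, hB, hIB, Finset.sdiff_eq_empty_iff_subset.mp h0⟩
    obtain ⟨x, hx⟩ := Finset.nonempty_of_ne_empty h0
    obtain ⟨hxB, hxIB'⟩ := Finset.mem_sdiff.mp hx
    have hxB' : x ∉ B' := fun h => hxIB' (Finset.mem_union_right _ h)
    have hxI : x ∉ I := fun h => hxIB' (Finset.mem_union_left _ h)
    obtain ⟨y, hy, hBy⟩ := exch_lemma hcard hr0 hrn h𝓑 hst hB hB'
      (Finset.mem_sdiff.mpr ⟨hxB, hxB'⟩)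
    obtain ⟨hyB', hyB⟩ := Finset.mem_sdiff.mp hy
    set B3 := insert y (B.erase x) with hB3
    have hIB3 : I ⊆ B3 := fun z hz =>
      Finset.mem_insert_of_mem (Finset.mem_erase.mpr ⟨fun h => hxI (h ▸ hz), hIB hz⟩)
    have hmon : B3 \ (I ∪ B') ⊆ (B \ (I ∪ B')).erase x := by
      intro z hz
      obtain ⟨hz1, hz2⟩ := Finset.mem_sdiff.mp hz
      rcases Finset.mem_insert.mp hz1 with rfl | hz3
      · exact absurd (Finset.mem_union_right _ hyB') hz2
      · obtain ⟨hzx, hzB⟩ := Finset.mem_erase.mp hz3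
        exact Finset.mem_erase.mpr ⟨hzx, Finset.mem_sdiff.mpr ⟨hzB, hz2⟩⟩
    have hcard3 : (B3 \ (I ∪ B')).card ≤ k := by
      have hh1 := Finset.card_le_card hmon
      have hh2 : ((B \ (I ∪ B')).erase x).card = (B \ (I ∪ B')).card - 1 :=
        Finset.card_erase_of_mem hx
      have hpos : 0 < (B \ (I ∪ B')).card := Finset.card_pos.mpr ⟨x, hx⟩
      omega
    exact ih B3 B' I hBy hB' hIB3 hcard3

end Backward

/-- A collection 𝓑 of r-element subsets of an n-element set E (with 0 < r < n) is the
collection of bases of a sparse paving matroid of rank r on E if and only if its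
complement in the set of all r-element subsets is a stable set in the Johnson graph
J(E,r), i.e. no two r-sets outside 𝓑 meet in exactly r−1 elements. -/
theorem sparse_paving_iff_johnson_stable {α : Type*} [Fintype α] [DecidableEq α]
    (n r : ℕ) (hcard : Fintype.card α = n) (hr0 : 0 < r) (hrn : r < n)
    (𝓑 : Finset (Finset α)) (h𝓑 : ∀ B ∈ 𝓑, B.card = r) :
    (∃ M : Matroid α, M.E = Set.univ ∧ mrk M = r ∧ SparsePaving M ∧
        ∀ B : Finset α, M.IsBase ↑B ↔ B ∈ 𝓑) ↔
      ∀ X Y : Finset α, X.card = r → Y.card = r → X ∉ 𝓑 → Y ∉ 𝓑 →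
        (X ∩ Y).card ≠ r - 1 := by
  constructor
  · rintro ⟨M, hE, hrk, hsp, hbase⟩
    exact forward_dir hcard hr0 hrn h𝓑 hE hrk hsp hbase
  intro hst
  classical
  set Ind : Set α → Prop := fun I => ∃ B ∈ 𝓑, I ⊆ ↑B with hInd
  have h𝓑ne : ∃ B, B ∈ 𝓑 := by
    obtain ⟨S, _, hS⟩ := Finset.exists_subset_card_eq
      (show r - 1 ≤ (Finset.univ : Finset α).card by rw [Finset.card_univ, hcard]; omega)
    obtain ⟨B, hB, _⟩ := extend_lemma hcard hr0 hrn hst S hS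
    exact ⟨B, hB⟩
  have ind_empty : Ind ∅ := by
    obtain ⟨B, hB⟩ := h𝓑ne
    exact ⟨B, hB, Set.empty_subset _⟩
  have ind_subset : ∀ ⦃I J : Set α⦄, Ind J → I ⊆ J → Ind I := by
    rintro I J ⟨B, hB, hJB⟩ hIJ
    exact ⟨B, hB, hIJ.trans hJB⟩
  have ind_aug : ∀ ⦃I J : Set α⦄, Ind I → Ind J → I.ncard < J.ncard →
      ∃ e ∈ J, e ∉ I ∧ Ind (insert e I) := by
    rintro I J ⟨B, hB, hIB⟩ ⟨B', hB', hJB'⟩ hlt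
    set I' := I.toFinset with hI'
    set J' := J.toFinset with hJ'
    have hI'c : I'.card = I.ncard := (Set.ncard_eq_toFinset_card' I).symm
    have hJ'c : J'.card = J.ncard := (Set.ncard_eq_toFinset_card' J).symm
    have hI'B : I' ⊆ B := by
      intro z hz
      have : z ∈ I := Set.mem_toFinset.mp hz
      exact_mod_cast hIB this
    have hJ'B : J' ⊆ B' := by
      intro z hz
      have : z ∈ J := Set.mem_toFinset.mp hz
      exact_mod_cast hJB' this
    obtain ⟨B'', hB'', hIB'', hsub⟩ := cleanup_lemma hcard hr0 hrn h𝓑 hst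
      ((B \ (I' ∪ B')).card) B B' I' hB hB' hI'B le_rfl
    have hJle : J'.card ≤ r := by
      rw [← h𝓑 B' hB']
      exact Finset.card_le_card hJ'B
    have key : ¬(B'' \ I' ⊆ B' \ J') := by
      intro hsub2
      have hh1 : (B'' \ I').card = r - I'.card := by
        rw [Finset.card_sdiff_of_subset hIB'', h𝓑 B'' hB'']
      have hh2 : (B' \ J').card = r - J'.card := by
        rw [Finset.card_sdiff_of_subset hJ'B, h𝓑 B' hB']
      have := Finset.card_le_card hsub2
      omega
    obtain ⟨y, hy1, hy2⟩ := Finset.not_subset.mp key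
    obtain ⟨hyB'', hyI'⟩ := Finset.mem_sdiff.mp hy1
    have hyB' : y ∈ B' := by
      rcases Finset.mem_union.mp (hsub hyB'') with h | h
      · exact absurd h hyI'
      · exact h
    have hyJ : y ∈ J' := by
      by_contra hyJ
      exact hy2 (Finset.mem_sdiff.mpr ⟨hyB', hyJ⟩)
    refine ⟨y, Set.mem_toFinset.mp hyJ, fun h => hyI' (Set.mem_toFinset.mpr h),
      B'', hB'', ?_⟩
    rw [Set.insert_subset_iff]
    refine ⟨by exact_mod_cast hyB'', ?_⟩
    intro z hz
    exact_mod_cast hIB'' (Set.mem_toFinset.mpr hz)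
  set M : Matroid α := (IndepMatroid.ofFinite (Set.finite_univ) Ind ind_empty ind_subset
    ind_aug (fun I _ => Set.subset_univ I)).matroid with hM
  have hMI : ∀ I : Set α, M.Indep I ↔ Ind I := by
    intro I
    rw [hM, IndepMatroid.matroid_indep_iff, IndepMatroid.ofFinite_indep]
  have hME : M.E = Set.univ := by
    rw [hM, IndepMatroid.matroid_E, IndepMatroid.ofFinite_E]
  have hbase : ∀ S : Set α, M.IsBase S ↔ ∃ B0 ∈ 𝓑, S = ↑B0 := by
    intro S
    constructor
    · intro hS
      obtain ⟨B0, hB0, hSB0⟩ := (hMI S).mp hS.indep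
      exact ⟨B0, hB0, hS.eq_of_subset_indep ((hMI ↑B0).mpr ⟨B0, hB0, subset_rfl⟩) hSB0⟩
    · rintro ⟨B0, hB0, rfl⟩
      apply Matroid.Indep.isBase_of_maximal ((hMI _).mpr ⟨B0, hB0, subset_rfl⟩)
      intro K hK hBK
      obtain ⟨B1, hB1, hKB1⟩ := (hMI K).mp hK
      have hsub01 : B0 ⊆ B1 := by
        intro z hz
        have : (z : α) ∈ K := hBK (by exact_mod_cast hz)
        exact_mod_cast hKB1 this
      have hB01 : B0 = B1 := Finset.eq_of_subset_of_card_le hsub01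
        (by rw [h𝓑 B0 hB0, h𝓑 B1 hB1])
      rw [← hB01] at hKB1
      exact subset_antisymm hBK hKB1
  have hbaseF : ∀ B : Finset α, M.IsBase ↑B ↔ B ∈ 𝓑 := by
    intro B
    rw [hbase]
    constructor
    · rintro ⟨B0, hB0, hBeq⟩
      rwa [Finset.coe_injective hBeq]
    · exact fun h => ⟨B, h, rfl⟩
  have hrk : mrk M = r := by
    apply mrk_eq_of_forall
    intro B hB
    obtain ⟨B0, hB0, rfl⟩ := (hbase B).mp hB
    rw [Set.ncard_coe_finset, h𝓑 B0 hB0]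
  have hdepcard : ∀ C : Set α, M.Dep C → r ≤ C.ncard := by
    intro C hC
    by_contra hcon
    push_neg at hcon
    have hCc : C.toFinset.card ≤ r - 1 := by
      rw [← Set.ncard_eq_toFinset_card']
      omega
    obtain ⟨S, hCS, _, hS⟩ := Finset.exists_subsuperset_card_eq
      (Finset.subset_univ C.toFinset) hCc
      (by rw [Finset.card_univ, hcard]; omega)
    obtain ⟨B, hB, hSB⟩ := extend_lemma hcard hr0 hrn hst S hS
    apply hC.not_indep
    refine (hMI C).mpr ⟨B, hB, ?_⟩
    intro z hz
    exact_mod_cast hSB (hCS (Set.mem_toFinset.mpr hz))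
  have hdualrk : mrk M✶ = n - r := by
    apply mrk_eq_of_forall
    intro B hB
    rw [Matroid.dual_isBase_iff (by simpa using hB.subset_ground)] at hB
    obtain ⟨B0, hB0, hBeq⟩ := (hbase _).mp hB
    rw [hME] at hBeq
    have h3 : (Set.univ : Set α).ncard = n := by
      rw [Set.ncard_univ, Nat.card_eq_fintype_card, hcard]
    have h2 : (Set.univ \ B).ncard = (Set.univ : Set α).ncard - B.ncard :=
      Set.ncard_diff (Set.subset_univ _)
    have h1 : (Set.univ \ B).ncard = r := by
      rw [hBeq, Set.ncard_coe_finset, h𝓑 B0 hB0]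
    have hBle : B.ncard ≤ n := by
      rw [← h3]
      exact Set.ncard_le_ncard (Set.subset_univ _) (Set.toFinite _)
    omega
  have hdualdep : ∀ C : Set α, M✶.Dep C → n - r ≤ C.ncard := by
    intro C hC
    by_contra hcon
    push_neg at hcon
    have hcompl : r + 1 ≤ C.toFinsetᶜ.card := by
      rw [Finset.card_compl, hcard, ← Set.ncard_eq_toFinset_card']
      omega
    obtain ⟨T, hTsub, hT⟩ := Finset.exists_subset_card_eq hcompl
    obtain ⟨B, hB, hBT⟩ := contain_lemma hcard hr0 hrn hst T hT
    apply hC.not_indep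
    rw [Matroid.dual_indep_iff_exists (by rw [hME]; exact Set.subset_univ _)]
    refine ⟨↑B, (hbaseF B).mpr hB, ?_⟩
    rw [Set.disjoint_right]
    intro z hz
    have hzT : z ∈ T := hBT (by exact_mod_cast hz)
    have := hTsub hzT
    rw [Finset.mem_compl, Set.mem_toFinset] at this
    exact this
  refine ⟨M, hME, hrk, ⟨?_, ?_⟩, hbaseF⟩
  · intro C hC
    rw [hrk, ← Set.Finite.cast_ncard_eq (Set.toFinite C), Nat.cast_le]
    exact hdepcard C hC.1
  · intro C hC
    rw [hdualrk, ← Set.Finite.cast_ncard_eq (Set.toFinite C), Nat.cast_le]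
    exact hdualdep C hC.1
end

section
/- Let M be a matroid on a finite ground set E, and let F be a flat of M of rank k ≥ 1. If there exists an independent set I of M with cl_{k−1}(I) = F, then F is not essential; that is, there is no matroid N on ground set F of rank k+1 whose truncation equals the restriction M|F. -/
open Matroid Set Filter Real

namespace PavingEnum

/-- `T` is the truncation of `N`: same ground set, and the independent sets of `T`
are exactly the independent sets of `N` of cardinality at most `rk N − 1`. -/
def IsTruncationOf {α : Type*} (T N : Matroid α) : Prop :=
  T.E = N.E ∧ ∀ I : Set α, T.Indep I ↔ (N.Indep I ∧ I.ncard + 1 ≤ mrk N)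

/-- `N` is an erection of `M` if `T(N) = M` or `N = M`. -/
def IsErection {α : Type*} (N M : Matroid α) : Prop :=
  IsTruncationOf M N ∨ N = M

/-- A set `X` is `k`-closed in `M` if it contains the closure of each of its
subsets of cardinality at most `k`. -/
def KClosed {α : Type*} (M : Matroid α) (k : ℕ) (X : Set α) : Prop :=
  ∀ Y ⊆ X, Y.encard ≤ (k : ℕ∞) → M.closure Y ⊆ X

/-- The `k`-closure of a set: the intersection of all `k`-closed sets containing it. -/
def kClosure {α : Type*} (M : Matroid α) (k : ℕ) (X : Set α) : Set α :=
  ⋂₀ {Y | KClosed M k Y ∧ X ⊆ Y}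

/-- A flat `F` of `M` of rank `k` is essential if the restriction `M|F` has a
nontrivial erection, i.e. there is a matroid on ground set `F` of rank `k+1`
whose truncation is `M|F`. -/
def IsEssentialFlat {α : Type*} (M : Matroid α) (F : Set α) : Prop :=
  M.IsFlat F ∧ ∃ N : Matroid α, N.E = F ∧ mrk N = mrnk M F + 1 ∧ IsTruncationOf (M ↾ F) N

end PavingEnum

open PavingEnum

/-- If F is a flat of M of rank k ≥ 1 and cl_{k−1}(I) = F for some independent set I
of M, then F is not essential: there is no matroid N on ground set F of rank k+1
whose truncation is the restriction M|F. -/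
theorem flat_not_essential {α : Type*} (M : Matroid α) (hE : M.E.Finite)
    (F : Set α) (k : ℕ) (hF : M.IsFlat F) (hFk : mrnk M F = k) (hk : 1 ≤ k)
    (I : Set α) (hI : M.Indep I) (hIF : kClosure M (k - 1) I = F) :
    ¬ ∃ N : Matroid α, N.E = F ∧ mrk N = k + 1 ∧ IsTruncationOf (M ↾ F) N := by
  rintro ⟨N, hNE, hNrk, hTE, hTI⟩
  have hFE : F ⊆ M.E := hF.subset_ground
  have hFfin : F.Finite := hE.subset hFE
  -- I is contained in its k-closure, which is F
  have hIsub : I ⊆ F := by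
    rw [← hIF]
    exact fun x hx => Set.mem_sInter.2 fun Y hY => hY.2 hx
  have hIE : I ⊆ N.E := hNE ▸ hIsub
  have hTIindep : (M ↾ F).Indep I := Matroid.restrict_indep_iff.2 ⟨hI, hIsub⟩
  obtain ⟨hNI, hIcard⟩ := (hTI I).1 hTIindep
  rw [hNrk] at hIcard
  have hGsub : N.closure I ⊆ F := hNE ▸ N.closure_subset_ground I
  -- key claim : N.closure I is (k-1)-closed in M
  have key : KClosed M (k - 1) (N.closure I) := by
    intro Y hYG hYcard
    have hYF : Y ⊆ F := hYG.trans hGsub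
    have hYfin : Y.Finite := hFfin.subset hYF
    have hYE : Y ⊆ N.E := hNE ▸ hYF
    have hYcard' : Y.ncard ≤ k - 1 :=
      (Set.encard_le_coe_iff_finite_ncard_le.1 hYcard).2
    obtain ⟨J, hJ⟩ := N.exists_isBasis Y hYE
    have hJY : J ⊆ Y := hJ.subset
    have hJcard : J.ncard ≤ k - 1 :=
      le_trans (Set.ncard_le_ncard hJY hYfin) hYcard'
    have hJT : (M ↾ F).Indep J := (hTI J).2 ⟨hJ.indep, by rw [hNrk]; omega⟩
    have hJM : M.Indep J := (Matroid.restrict_indep_iff.1 hJT).1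
    have hJF : J ⊆ F := hJY.trans hYF
    -- Y is contained in the M-closure of J
    have hYclJ : Y ⊆ M.closure J := by
      intro y hy
      by_contra hyn
      have hyJ : y ∉ J := fun h => hyn (M.subset_closure J hJM.subset_ground h)
      have hyM : M.Indep (insert y J) := by
        rw [hJM.insert_indep_iff_of_notMem hyJ]
        exact ⟨hFE (hYF hy), hyn⟩
      have hins : (M ↾ F).Indep (insert y J) :=
        Matroid.restrict_indep_iff.2 ⟨hyM, Set.insert_subset (hYF hy) hJF⟩
      have hNins : N.Indep (insert y J) := ((hTI _).1 hins).1
      have hyNcl : y ∈ N.closure J :=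
        hJ.closure_eq_closure ▸ N.subset_closure Y hYE hy
      exact ((hJ.indep.insert_indep_iff_of_notMem hyJ).1 hNins).2 hyNcl
    -- now show the M-closure of Y is inside N.closure I
    intro x hx
    have hxF : x ∈ F := by
      have : M.closure Y ⊆ F := hF.closure ▸ M.closure_subset_closure hYF
      exact this hx
    have hxJ : x ∈ M.closure J :=
      (M.closure_subset_closure_of_subset_closure hYclJ) hx
    have hxNJ : x ∈ N.closure J := by
      by_contra hxn
      have hxJ' : x ∉ J := fun h => hxn (N.subset_closure J hJ.indep.subset_ground h)
      have hNins : N.Indep (insert x J) := by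
        rw [hJ.indep.insert_indep_iff_of_notMem hxJ']
        exact ⟨hNE ▸ hxF, hxn⟩
      have hcard : (insert x J).ncard + 1 ≤ mrk N := by
        rw [hNrk]
        have := Set.ncard_insert_le x J
        omega
      have hins : (M ↾ F).Indep (insert x J) := (hTI _).2 ⟨hNins, hcard⟩
      have hMins : M.Indep (insert x J) := (Matroid.restrict_indep_iff.1 hins).1
      exact ((hJM.insert_indep_iff_of_notMem hxJ').1 hMins).2 hxJ
    have hJG : J ⊆ N.closure I := hJY.trans hYG
    exact (N.closure_subset_closure_of_subset_closure hJG) hxNJ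
  -- hence F ⊆ N.closure I, so N.closure I = N.E
  have hFsub : F ⊆ N.closure I := by
    rw [← hIF]
    exact Set.sInter_subset_of_mem ⟨key, N.subset_closure I hIE⟩
  have hclI : N.closure I = N.E := by
    rw [hNE]
    exact hGsub.antisymm hFsub
  have hIbase : N.IsBase I :=
    hNI.isBase_of_spanning ((Matroid.spanning_iff_closure_eq (M := N) hIE).2 hclI)
  -- so the rank of N is I.ncard ≤ k, contradicting mrk N = k + 1
  have hset : {n : ℕ | ∃ B, N.IsBase B ∧ B.ncard = n} = {I.ncard} := by
    ext n
    constructor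
    · rintro ⟨B, hB, rfl⟩
      exact hB.ncard_eq_ncard_of_isBase hIbase
    · rintro rfl
      exact ⟨I, hIbase, rfl⟩
  have : mrk N = I.ncard := by rw [mrk, hset, csSup_singleton]
  omega
end

section
/- Let M be a matroid of rank r ≥ 2 on a finite ground set E, and suppose that for each hyperplane H of M a set U_H ⊆ E is given which is (r−1)-free in M and satisfies cl_{r−2}(U_H) = H. Put 𝓤 = { U_H : H a hyperplane of M with |U_H| ≥ r }. Then there exists a paving matroid N of rank r on E whose dependent hyperplanes (the hyperplanes of N that are dependent in N, equivalently those of cardinality at least r) are exactly the members of 𝓤. -/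
open Matroid Set Filter Real

open PavingEnum

/-- A hyperplane: a maximal proper flat. -/
def IsHyperplane {α : Type*} (M : Matroid α) (H : Set α) : Prop :=
  M.IsFlat H ∧ H ≠ M.E ∧ ∀ F : Set α, M.IsFlat F → H ⊂ F → F = M.E

/-- A set U is k-free in M if it contains no circuit of M of cardinality at most k. -/
def KFree {α : Type*} (M : Matroid α) (k : ℕ) (U : Set α) : Prop :=
  ∀ C : Set α, PavingEnum.IsCircuit M C → C ⊆ U → ¬ (C.encard ≤ (k : ℕ∞))


namespace PavingAux

open Matroid Set PavingEnum

variable {α : Type*} {M : Matroid α} {F S B : Set α}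

lemma flat_of_closure_subset (h : M.closure F ⊆ F) (hF : F ⊆ M.E) : M.IsFlat F := by
  refine ⟨fun I X hIF hIX => hIX.subset_closure.trans ?_, hF⟩
  rw [hIF.closure_eq_closure]
  exact h

lemma exists_isCircuit_subset : ∀ (n : ℕ) (X : Set α), X.ncard ≤ n → X.Finite → M.Dep X →
    ∃ C ⊆ X, (M.Dep C ∧ ∀ D, D ⊂ C → M.Indep D) := by
  intro n
  induction n with
  | zero =>
    intro X hc hfin hD
    rw [Nat.le_zero, Set.ncard_eq_zero hfin] at hc
    subst hc
    exact absurd M.empty_indep hD.not_indep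
  | succ n ih =>
    intro X hc hfin hD
    by_cases h : ∀ D, D ⊂ X → M.Indep D
    · exact ⟨X, Subset.rfl, hD, h⟩
    · push_neg at h
      obtain ⟨D, hDX, hDind⟩ := h
      have hDdep : M.Dep D :=
        (Matroid.not_indep_iff (hDX.subset.trans hD.subset_ground)).mp hDind
      obtain ⟨C, hCD, hC⟩ := ih D (by
          have := Set.ncard_lt_ncard hDX hfin
          omega) (hfin.subset hDX.subset) hDdep
      exact ⟨C, hCD.trans hDX.subset, hC⟩

lemma base_ncard (hE : M.E.Finite) (hB : M.IsBase B) : B.ncard = mrk M := by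
  have h : {n : ℕ | ∃ B', M.IsBase B' ∧ B'.ncard = n} = {B.ncard} := by
    ext n
    simp only [mem_setOf_eq, mem_singleton_iff]
    exact ⟨fun ⟨B', hB', h'⟩ => h' ▸ hB'.ncard_eq_ncard_of_isBase hB, fun h => ⟨B, hB, h.symm⟩⟩
  rw [mrk, h, csSup_singleton]

lemma base_of_indep_ncard (hE : M.E.Finite) (hB : M.Indep B) (h : B.ncard = mrk M) :
    M.IsBase B := by
  obtain ⟨B', hB', hBB'⟩ := hB.exists_isBase_superset
  have heq : B = B' :=
    Set.eq_of_subset_of_ncard_le hBB' (by rw [h, base_ncard hE hB']) (hE.subset hB'.subset_ground)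
  rw [heq]; exact hB'

end PavingAux

/-- Let M be a matroid of rank r ≥ 2 on a finite ground set E, and suppose each
hyperplane H of M is assigned a set U_H ⊆ E that is (r−1)-free with
cl_{r−2}(U_H) = H. Then { U_H : H a hyperplane, |U_H| ≥ r } is exactly the
collection of dependent hyperplanes of a paving matroid of rank r on E. -/
theorem uH_dependent_hyperplanes_paving {α : Type*} (M : Matroid α) (r : ℕ)
    (hE : M.E.Finite) (hrk : mrk M = r) (hr : 2 ≤ r)
    (U : Set α → Set α)
    (hU : ∀ H : Set α, IsHyperplane M H →
      U H ⊆ M.E ∧ KFree M (r - 1) (U H) ∧ kClosure M (r - 2) (U H) = H) :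
    ∃ N : Matroid α, N.E = M.E ∧ mrk N = r ∧ Paving N ∧
      {H : Set α | IsHyperplane N H ∧ ¬ N.Indep H} =
        {X : Set α | ∃ H : Set α, IsHyperplane M H ∧ (r : ℕ∞) ≤ (U H).encard ∧ X = U H} := by
  classical
  have hUH : ∀ H, IsHyperplane M H → U H ⊆ H := by
    intro H hH
    conv_rhs => rw [← (hU H hH).2.2]
    exact subset_sInter fun Y hY => hY.2
  -- the closure of any (r-1)-subset of U H is H
  have hclS : ∀ H S, IsHyperplane M H → S ⊆ U H → S.ncard = r - 1 → M.closure S = H := by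
    intro H S hH hS hcard
    have hSH : S ⊆ H := hS.trans (hUH H hH)
    have hSE : S ⊆ M.E := hSH.trans hH.1.subset_ground
    have hSfin : S.Finite := hE.subset hSE
    have hSind : M.Indep S := by
      by_contra hni
      have hSdep : M.Dep S := (Matroid.not_indep_iff hSE).mp hni
      obtain ⟨C, hCS, hC⟩ := PavingAux.exists_isCircuit_subset S.ncard S le_rfl hSfin hSdep
      refine (hU H hH).2.1 C hC (hCS.trans hS) ?_
      calc C.encard ≤ S.encard := Set.encard_mono hCS
      _ = ((r - 1 : ℕ) : ℕ∞) := by rw [← hSfin.cast_ncard_eq, hcard]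
    have hclsub : M.closure S ⊆ H := by
      rw [← hH.1.closure]; exact M.closure_subset_closure hSH
    refine hclsub.antisymm ?_
    by_contra hne
    obtain ⟨e, heH, hecl⟩ := Set.not_subset.mp hne
    have heE : e ∈ M.E := hH.1.subset_ground heH
    have heS : e ∉ S := fun h => hecl (M.subset_closure S hSE h)
    have hins : M.Indep (insert e S) := hSind.insert_indep_iff.mpr (Or.inl ⟨heE, hecl⟩)
    have hbase : M.IsBase (insert e S) := PavingAux.base_of_indep_ncard hE hins (by
      rw [hrk, Set.ncard_insert_of_notMem heS hSfin, hcard]; omega)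
    have hsub : M.E ⊆ H := by
      rw [← hbase.closure_eq, ← hH.1.closure]
      exact M.closure_subset_closure (insert_subset heH hSH)
    exact hH.2.1 (hH.1.subset_ground.antisymm hsub)
  have huniq : ∀ H H' S, IsHyperplane M H → IsHyperplane M H' → S ⊆ U H → S ⊆ U H' →
      S.ncard = r - 1 → H = H' := by
    intro H H' S hH hH' h1 h2 hc
    rw [← hclS H S hH h1 hc, hclS H' S hH' h2 hc]
  -- the independence predicate of the new matroid
  set Ind : Set α → Prop := fun I => I ⊆ M.E ∧
    (I.ncard ≤ r - 1 ∨ (I.ncard = r ∧ ∀ H, IsHyperplane M H → ¬ I ⊆ U H)) with hInd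
  have hind_empty : Ind ∅ := ⟨empty_subset _, Or.inl (by simp)⟩
  have hind_subset : ∀ ⦃I J⦄, Ind J → I ⊆ J → Ind I := by
    intro I J hJ hIJ
    have hJfin : J.Finite := hE.subset hJ.1
    refine ⟨hIJ.trans hJ.1, ?_⟩
    have hle : I.ncard ≤ J.ncard := Set.ncard_le_ncard hIJ hJfin
    rcases hJ.2 with h | ⟨hJr, hJall⟩
    · exact Or.inl (le_trans hle h)
    by_cases hI : I.ncard ≤ r - 1
    · exact Or.inl hI
    have heq : I = J := Set.eq_of_subset_of_ncard_le hIJ (by omega) hJfin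
    subst heq
    exact Or.inr ⟨hJr, hJall⟩
  have hind_aug : ∀ ⦃I J⦄, Ind I → Ind J → I.ncard < J.ncard →
      ∃ e ∈ J, e ∉ I ∧ Ind (insert e I) := by
    intro I J hI hJ hlt
    have hIfin : I.Finite := hE.subset hI.1
    have hJfin : J.Finite := hE.subset hJ.1
    have hJr : J.ncard ≤ r := by rcases hJ.2 with h | ⟨h, -⟩ <;> omega
    have hne : ¬ J ⊆ I := fun h => absurd (Set.ncard_le_ncard h hIfin) (by omega)
    obtain ⟨e0, he0J, he0I⟩ := Set.not_subset.mp hne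
    by_cases hsmall : I.ncard + 1 ≤ r - 1
    · exact ⟨e0, he0J, he0I, insert_subset (hJ.1 he0J) hI.1,
        Or.inl (by rw [Set.ncard_insert_of_notMem he0I hIfin]; omega)⟩
    · have hIr : I.ncard = r - 1 := by omega
      have hJall : ∀ H, IsHyperplane M H → ¬ J ⊆ U H := by
        rcases hJ.2 with h | ⟨-, h⟩
        · omega
        · exact h
      by_contra hcon
      push_neg at hcon
      have hmem : ∀ e ∈ J, e ∉ I → ∃ H, IsHyperplane M H ∧ insert e I ⊆ U H := by
        intro e heJ heI
        have h1 : ¬ Ind (insert e I) := hcon e heJ heI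
        by_contra h2
        push_neg at h2
        refine h1 ⟨insert_subset (hJ.1 heJ) hI.1, Or.inr
          ⟨by rw [Set.ncard_insert_of_notMem heI hIfin]; omega, fun H hH => h2 H hH⟩⟩
      obtain ⟨H0, hH0, hsub0⟩ := hmem e0 he0J he0I
      have hIU0 : I ⊆ U H0 := (subset_insert e0 I).trans hsub0
      have hJU0 : J ⊆ U H0 := by
        intro e heJ
        by_cases heI : e ∈ I
        · exact hIU0 heI
        obtain ⟨H1, hH1, hsub1⟩ := hmem e heJ heI
        have hh : H1 = H0 := huniq H1 H0 I hH1 hH0 ((subset_insert e I).trans hsub1) hIU0 hIr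
        exact hh ▸ hsub1 (mem_insert e I)
      exact hJall H0 hH0 hJU0
  have hground : ∀ ⦃I⦄, Ind I → I ⊆ M.E := fun I hI => hI.1
  set N : Matroid α :=
    (IndepMatroid.ofFinite hE Ind hind_empty hind_subset hind_aug hground).matroid with hN
  have hNE : N.E = M.E := by rw [hN]; rfl
  have hNI : ∀ I, N.Indep I ↔ Ind I := fun I => by rw [hN]; exact Iff.rfl
  have hNfin : N.E.Finite := by rw [hNE]; exact hE
  obtain ⟨B0, hB0⟩ := M.exists_isBase
  have hB0card : B0.ncard = r := (PavingAux.base_ncard hE hB0).trans hrk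
  have hB0ind : Ind B0 := by
    refine ⟨hB0.subset_ground, Or.inr ⟨hB0card, fun H hH hBU => ?_⟩⟩
    have hsub : M.E ⊆ H := by
      rw [← hB0.closure_eq, ← hH.1.closure]
      exact M.closure_subset_closure (hBU.trans (hUH H hH))
    exact hH.2.1 (hH.1.subset_ground.antisymm hsub)
  have hNcard : ∀ I, Ind I → I.ncard ≤ r := fun I hI => by
    rcases hI.2 with h | ⟨h, -⟩ <;> omega
  have hmrkN : mrk N = r := by
    obtain ⟨B1, hB1, hBB1⟩ := ((hNI B0).mpr hB0ind).exists_isBase_superset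
    have h1 : B1.ncard ≤ r := hNcard B1 ((hNI B1).mp hB1.indep)
    have h2 : r ≤ B1.ncard := hB0card ▸ Set.ncard_le_ncard hBB1 (hNfin.subset hB1.subset_ground)
    rw [← PavingAux.base_ncard hNfin hB1]; omega
  have hNbase : ∀ I, Ind I → I.ncard = r → N.IsBase I := fun I hI hc =>
    PavingAux.base_of_indep_ncard hNfin ((hNI I).mpr hI) (by rw [hmrkN]; exact hc)
  have hpav : Paving N := by
    intro C hC
    rw [hmrkN]
    by_contra hlt
    have hCE : C ⊆ M.E := by rw [← hNE]; exact hC.1.subset_ground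
    have hCfin : C.Finite := hE.subset hCE
    rw [← hCfin.cast_ncard_eq, Nat.cast_le, not_le] at hlt
    exact hC.1.not_indep ((hNI C).mpr ⟨hCE, Or.inl (by omega)⟩)
  have hkey : ∀ H S e, IsHyperplane M H → S ⊆ U H → S.ncard = r - 1 → e ∈ M.E → e ∉ U H →
      Ind (insert e S) := by
    intro H S e hH hS hc heE heU
    have hSE : S ⊆ M.E := hS.trans (hU H hH).1
    have hSfin : S.Finite := hE.subset hSE
    have heS : e ∉ S := fun h => heU (hS h)
    refine ⟨insert_subset heE hSE, Or.inr ⟨by rw [Set.ncard_insert_of_notMem heS hSfin]; omega,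
      fun H' hH' hsub => ?_⟩⟩
    have hh : H' = H := huniq H' H S hH' hH ((subset_insert e S).trans hsub) hS hc
    exact heU (hh ▸ hsub (mem_insert e S))
  have hBigHyp : ∀ H, IsHyperplane M H → (r : ℕ∞) ≤ (U H).encard →
      IsHyperplane N (U H) ∧ ¬ N.Indep (U H) := by
    intro H hH hUr
    have hWE : U H ⊆ M.E := (hU H hH).1
    have hWfin : (U H).Finite := hE.subset hWE
    have hWcard : r ≤ (U H).ncard := by rwa [← hWfin.cast_ncard_eq, Nat.cast_le] at hUr
    have hWdep : ¬ Ind (U H) := by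
      rintro ⟨-, h | ⟨-, h⟩⟩
      · omega
      · exact h H hH Subset.rfl
    have hWflat : N.IsFlat (U H) := by
      obtain ⟨I, hI⟩ := N.exists_isBasis (U H) (by rw [hNE]; exact hWE)
      have hIind : Ind I := (hNI I).mp hI.indep
      have hIW : I ⊆ U H := hI.subset
      have hIfin : I.Finite := hWfin.subset hIW
      have hIle : I.ncard ≤ r - 1 := by
        rcases hIind.2 with h | ⟨hc, hall⟩
        · exact h
        · exact absurd hIW (hall H hH)
      have hIcard : I.ncard = r - 1 := by
        by_contra hnee
        have hlt : I.ncard < r - 1 := by omega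
        have hnsub : ¬ U H ⊆ I := fun h => by
          have := Set.ncard_le_ncard h hIfin; omega
        obtain ⟨e, heW, heI⟩ := Set.not_subset.mp hnsub
        have hii : N.Indep (insert e I) := (hNI _).mpr ⟨insert_subset (hWE heW) hIind.1,
          Or.inl (by rw [Set.ncard_insert_of_notMem heI hIfin]; omega)⟩
        exact heI (hI.mem_of_insert_indep heW hii)
      refine PavingAux.flat_of_closure_subset ?_ (by rw [hNE]; exact hWE)
      rw [← hI.closure_eq_closure]
      intro e hecl
      by_contra heW
      have heE : e ∈ M.E := by rw [← hNE]; exact N.closure_subset_ground I hecl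
      have heI : e ∉ I := fun h => heW (hIW h)
      have hins : N.Indep (insert e I) := (hNI _).mpr (hkey H I e hH hIW hIcard heE heW)
      rcases hI.indep.insert_indep_iff.mp hins with ⟨-, h⟩ | h
      · exact h hecl
      · exact heI h
    refine ⟨⟨hWflat, ?_, ?_⟩, fun h => hWdep ((hNI _).mp h)⟩
    · intro hWeq
      have hsub : M.E ⊆ H := by rw [← hNE, ← hWeq]; exact hUH H hH
      exact hH.2.1 (hH.1.subset_ground.antisymm hsub)
    · intro F hF hssub
      obtain ⟨e, heF, heW⟩ := Set.exists_of_ssubset hssub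
      obtain ⟨S, hSW, hScard⟩ := Set.exists_subset_card_eq
        (show r - 1 ≤ (U H).ncard by omega)
      have heE : e ∈ M.E := by rw [← hNE]; exact hF.subset_ground heF
      have hins : Ind (insert e S) := hkey H S e hH hSW hScard heE heW
      have hbase : N.IsBase (insert e S) := hNbase _ hins (by
        rw [Set.ncard_insert_of_notMem (fun h => heW (hSW h)) (hWfin.subset hSW), hScard]
        omega)
      have hsub : N.E ⊆ F := by
        rw [← hbase.closure_eq, ← hF.closure]
        exact N.closure_subset_closure (insert_subset heF (hSW.trans hssub.subset))
      exact hF.subset_ground.antisymm hsub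
  have hconv : ∀ H', IsHyperplane N H' → ¬ N.Indep H' →
      ∃ H, IsHyperplane M H ∧ (r : ℕ∞) ≤ (U H).encard ∧ H' = U H := by
    intro H' hH' hdep
    have hH'E : H' ⊆ M.E := by rw [← hNE]; exact hH'.1.subset_ground
    have hH'fin : H'.Finite := hE.subset hH'E
    have hnind : ¬ Ind H' := fun h => hdep ((hNI _).mpr h)
    have hH'card : r ≤ H'.ncard := by
      by_contra h
      exact hnind ⟨hH'E, Or.inl (by omega)⟩
    obtain ⟨I, hI⟩ := N.exists_isBasis H' (by rw [hNE]; exact hH'E)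
    have hIind : Ind I := (hNI I).mp hI.indep
    have hIfin : I.Finite := hH'fin.subset hI.subset
    have hInotr : I.ncard ≠ r := by
      intro hc
      have hbase := hNbase I hIind hc
      have hsub : N.E ⊆ H' := by
        rw [← hbase.closure_eq, ← hH'.1.closure]
        exact N.closure_subset_closure hI.subset
      exact hH'.2.1 (hH'.1.subset_ground.antisymm hsub)
    have hIler := hNcard I hIind
    have hIcard : I.ncard = r - 1 := by
      by_contra hnee
      have hlt : I.ncard < r - 1 := by omega
      have hnsub : ¬ H' ⊆ I := fun h => by
        have := Set.ncard_le_ncard h hIfin; omega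
      obtain ⟨e, heH, heI⟩ := Set.not_subset.mp hnsub
      have hii : N.Indep (insert e I) := (hNI _).mpr ⟨insert_subset (hH'E heH) hIind.1,
        Or.inl (by rw [Set.ncard_insert_of_notMem heI hIfin]; omega)⟩
      exact heI (hI.mem_of_insert_indep heH hii)
    have hnsub : ¬ H' ⊆ I := fun h => by
      have := Set.ncard_le_ncard h hIfin; omega
    obtain ⟨e0, he0H, he0I⟩ := Set.not_subset.mp hnsub
    have hins_dep : ∀ e ∈ H', e ∉ I → ∃ H, IsHyperplane M H ∧ insert e I ⊆ U H := by
      intro e heH heI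
      have hdep' : N.Dep (insert e I) := hI.insert_dep ⟨heH, heI⟩
      have hnind' : ¬ Ind (insert e I) := fun h => hdep'.not_indep ((hNI _).mpr h)
      by_contra h2
      push_neg at h2
      refine hnind' ⟨insert_subset (hH'E heH) hIind.1, Or.inr
        ⟨by rw [Set.ncard_insert_of_notMem heI hIfin]; omega, fun H hH => h2 H hH⟩⟩
    obtain ⟨H0, hH0, hsub0⟩ := hins_dep e0 he0H he0I
    have hIU0 : I ⊆ U H0 := (subset_insert e0 I).trans hsub0
    have hH'U0 : H' ⊆ U H0 := by
      intro e heH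
      by_cases heI : e ∈ I
      · exact hIU0 heI
      obtain ⟨H1, hH1, hsub1⟩ := hins_dep e heH heI
      have hh : H1 = H0 := huniq H1 H0 I hH1 hH0 ((subset_insert e I).trans hsub1) hIU0 hIcard
      exact hh ▸ hsub1 (mem_insert e I)
    have hU0card : (r : ℕ∞) ≤ (U H0).encard := by
      calc (r : ℕ∞) ≤ H'.encard := by
            rw [← hH'fin.cast_ncard_eq, Nat.cast_le]; exact hH'card
      _ ≤ (U H0).encard := Set.encard_mono hH'U0
    refine ⟨H0, hH0, hU0card, ?_⟩
    by_contra hnee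
    have hss : H' ⊂ U H0 := Set.ssubset_iff_subset_ne.mpr ⟨hH'U0, hnee⟩
    have heq := hH'.2.2 (U H0) (hBigHyp H0 hH0 hU0card).1.1 hss
    exact (hBigHyp H0 hH0 hU0card).1.2.1 heq
  refine ⟨N, hNE, hmrkN, hpav, ?_⟩
  ext X
  simp only [mem_setOf_eq]
  constructor
  · rintro ⟨h1, h2⟩
    exact hconv X h1 h2
  · rintro ⟨H, hH, hc, rfl⟩
    exact hBigHyp H hH hc
end
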